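/- arXiv:1611.07455 — 3 statements merged into one kernel-verified Lean document; each statement's English description precedes it below -/
import Mathlib

section
/- Let ρ_ABC = ∑_{k=1}^K p_k ρ^k_ABC be a convex combination of states on H_A ⊗ H_B ⊗ H_C. If the marginal states {ρ_B^k}_k are mutually orthogonal (ρ_B^k ⊥ ρ_B^{k′} for k ≠ k′) and the marginal states {ρ_C^k}_k are mutually orthogonal (ρ_C^k ⊥ ρ_C^{k′} for k ≠ k′), then T^(a)(ρ_ABC) = ∑_{k=1}^K p_k T^(a)(ρ^k_ABC). -/
open Matrix Kronecker
open scoped Classical ComplexOrder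

noncomputable section

/-- A state (density operator): positive semidefinite with unit trace. -/
def IsState {n : Type*} [Fintype n] (ρ : Matrix n n ℂ) : Prop :=
  ρ.PosSemidef ∧ ρ.trace = 1

/-- A unit vector. -/
def UnitVec {n : Type*} [Fintype n] (ψ : n → ℂ) : Prop :=
  ∑ i, Complex.normSq (ψ i) = 1

/-- The rank-one projection `|ψ⟩⟨ψ|`. -/
def pureSt {n : Type*} (ψ : n → ℂ) : Matrix n n ℂ :=
  Matrix.vecMulVec ψ (star ψ)

/-- Von Neumann entropy `S(ρ) = -Tr(ρ log ρ)`, computed via the eigenvalues of a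
Hermitian matrix (with the convention `0 log 0 = 0`, and junk value `0` on
non-Hermitian input). -/
def entropy {n : Type*} [Fintype n] [DecidableEq n] (ρ : Matrix n n ℂ) : ℝ :=
  if h : ρ.IsHermitian then -∑ i, h.eigenvalues i * Real.log (h.eigenvalues i) else 0

/-- Partial trace over the second tensor factor. -/
def ptraceRight {X Y : Type*} [Fintype Y] (ρ : Matrix (X × Y) (X × Y) ℂ) :
    Matrix X X ℂ :=
  fun x x' => ∑ y, ρ (x, y) (x', y)

/-- Partial trace over the first tensor factor. -/
def ptraceLeft {X Y : Type*} [Fintype X] (ρ : Matrix (X × Y) (X × Y) ℂ) :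
    Matrix Y Y ℂ :=
  fun y y' => ∑ x, ρ (x, y) (x, y')

/-- Marginal `ρ_AB` of a tripartite state. -/
def margAB {A B C : Type*} [Fintype C] (ρ : Matrix (A × B × C) (A × B × C) ℂ) :
    Matrix (A × B) (A × B) ℂ :=
  fun x y => ∑ c, ρ (x.1, x.2, c) (y.1, y.2, c)

/-- Marginal `ρ_AC` of a tripartite state. -/
def margAC {A B C : Type*} [Fintype B] (ρ : Matrix (A × B × C) (A × B × C) ℂ) :
    Matrix (A × C) (A × C) ℂ :=
  fun x y => ∑ b, ρ (x.1, b, x.2) (y.1, b, y.2)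

/-- Marginal `ρ_BC` of a tripartite state. -/
def margBC {A B C : Type*} [Fintype A] (ρ : Matrix (A × B × C) (A × B × C) ℂ) :
    Matrix (B × C) (B × C) ℂ :=
  fun x y => ∑ a, ρ (a, x.1, x.2) (a, y.1, y.2)

/-- Marginal `ρ_A` of a tripartite state. -/
def margA {A B C : Type*} [Fintype B] [Fintype C]
    (ρ : Matrix (A × B × C) (A × B × C) ℂ) : Matrix A A ℂ :=
  fun a a' => ∑ b, ∑ c, ρ (a, b, c) (a', b, c)

/-- Marginal `ρ_B` of a tripartite state. -/
def margB {A B C : Type*} [Fintype A] [Fintype C]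
    (ρ : Matrix (A × B × C) (A × B × C) ℂ) : Matrix B B ℂ :=
  fun b b' => ∑ a, ∑ c, ρ (a, b, c) (a, b', c)

/-- Marginal `ρ_C` of a tripartite state. -/
def margC {A B C : Type*} [Fintype A] [Fintype B]
    (ρ : Matrix (A × B × C) (A × B × C) ℂ) : Matrix C C ℂ :=
  fun c c' => ∑ a, ∑ b, ρ (a, b, c) (a, b, c')

/-- `T^(a)(ρ_ABC) = S(ρ_AB) + S(ρ_AC) − S(ρ_B) − S(ρ_C)`, the deviation from
saturation of strong subadditivity. -/
def Ta {A B C : Type*} [Fintype A] [Fintype B] [Fintype C]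
    [DecidableEq A] [DecidableEq B] [DecidableEq C]
    (ρ : Matrix (A × B × C) (A × B × C) ℂ) : ℝ :=
  entropy (margAB ρ) + entropy (margAC ρ) - entropy (margB ρ) - entropy (margC ρ)

/-- Entanglement of formation of a bipartite state (infimum over pure-state
ensembles realizing `ρ`). -/
def eof {X Y : Type*} [Fintype X] [Fintype Y] [DecidableEq X]
    (ρ : Matrix (X × Y) (X × Y) ℂ) : ℝ :=
  sInf { e : ℝ | ∃ (K : ℕ) (p : Fin K → ℝ) (ψ : Fin K → X × Y → ℂ),
    (∀ i, 0 ≤ p i) ∧ (∀ i, UnitVec (ψ i)) ∧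
    ρ = ∑ i, p i • pureSt (ψ i) ∧
    e = ∑ i, p i * entropy (ptraceRight (pureSt (ψ i))) }

/-- Probability of obtaining the outcome of the rank-one projector `|u⟩⟨u|`
measured on the second subsystem. -/
def measProb {X Y : Type*} [Fintype X] [Fintype Y] [DecidableEq X]
    (ρ : Matrix (X × Y) (X × Y) ℂ) (u : Y → ℂ) : ℝ :=
  ((((1 : Matrix X X ℂ) ⊗ₖ pureSt u) * ρ).trace).re

/-- Post-measurement state of the first subsystem after obtaining the outcome
of the rank-one projector `|u⟩⟨u|` on the second subsystem. -/
def postState {X Y : Type*} [Fintype X] [Fintype Y] [DecidableEq X]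
    (ρ : Matrix (X × Y) (X × Y) ℂ) (u : Y → ℂ) : Matrix X X ℂ :=
  (measProb ρ u)⁻¹ •
    ptraceRight (((1 : Matrix X X ℂ) ⊗ₖ pureSt u) * ρ * ((1 : Matrix X X ℂ) ⊗ₖ pureSt u))

/-- Classical correlation `J^(Y)(ρ_XY)`: supremum over complete families of
mutually orthogonal rank-one projectors on `H_Y` (parametrized by orthonormal
bases `v` of `H_Y`) of `S(ρ_X) − ∑ᵢ pᵢ S(ρ_{X|i})`. -/
def classicalCorr {X Y : Type*} [Fintype X] [Fintype Y] [DecidableEq X] [DecidableEq Y]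
    (ρ : Matrix (X × Y) (X × Y) ℂ) : ℝ :=
  sSup { r : ℝ | ∃ v : Y → Y → ℂ,
    (∀ i j, star (v i) ⬝ᵥ v j = if i = j then 1 else 0) ∧
    r = entropy (ptraceRight ρ) - ∑ i, measProb ρ (v i) * entropy (postState ρ (v i)) }

/-- Quantum mutual information `I(ρ_XY) = S(ρ_X) + S(ρ_Y) − S(ρ_XY)`. -/
def mutualInfo {X Y : Type*} [Fintype X] [Fintype Y] [DecidableEq X] [DecidableEq Y]
    (ρ : Matrix (X × Y) (X × Y) ℂ) : ℝ :=
  entropy (ptraceRight ρ) + entropy (ptraceLeft ρ) - entropy ρ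

/-- Quantum discord `D^(Y)(ρ_XY)` with measurement on the second subsystem. -/
def discord {X Y : Type*} [Fintype X] [Fintype Y] [DecidableEq X] [DecidableEq Y]
    (ρ : Matrix (X × Y) (X × Y) ℂ) : ℝ :=
  mutualInfo ρ - classicalCorr ρ

/-- Quantum conditional entropy `S(X|Y) = S(ρ_XY) − S(ρ_Y)`. -/
def condEnt {X Y : Type*} [Fintype X] [Fintype Y] [DecidableEq X] [DecidableEq Y]
    (ρ : Matrix (X × Y) (X × Y) ℂ) : ℝ :=
  entropy ρ - entropy (ptraceLeft ρ)

/-- Marginal `ρ_{AB̃}` (`B̃ = BE`) of a four-partite state on `A × B × C × E`. -/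
def margABE {A B C E : Type*} [Fintype C]
    (Ψ : Matrix (A × B × C × E) (A × B × C × E) ℂ) :
    Matrix (A × B × E) (A × B × E) ℂ :=
  fun x y => ∑ c, Ψ (x.1, x.2.1, c, x.2.2) (y.1, y.2.1, c, y.2.2)

/-- Marginal `ρ_{AC̃}` (`C̃ = CE`) of a four-partite state on `A × B × C × E`. -/
def margACE {A B C E : Type*} [Fintype B]
    (Ψ : Matrix (A × B × C × E) (A × B × C × E) ℂ) :
    Matrix (A × C × E) (A × C × E) ℂ :=
  fun x y => ∑ b, Ψ (x.1, b, x.2.1, x.2.2) (y.1, b, y.2.1, y.2.2)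

/-- Marginal `ρ_ABC` of a four-partite state on `A × B × C × E` (trace out `E`). -/
def margABC {A B C E : Type*} [Fintype E]
    (Ψ : Matrix (A × B × C × E) (A × B × C × E) ℂ) :
    Matrix (A × B × C) (A × B × C) ℂ :=
  fun x y => ∑ e, Ψ (x.1, x.2.1, x.2.2, e) (y.1, y.2.1, y.2.2, e)

/-- Reordering `(A ⊗ (B^L ⊗ C^L)) ⊗ (B^R ⊗ C^R) ≃ A ⊗ (B^L ⊗ B^R) ⊗ (C^L ⊗ C^R)`. -/
def reindexYZ (A BL BR CL CR : Type*) :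
    (A × (BL × CL)) × (BR × CR) ≃ A × (BL × BR) × (CL × CR) where
  toFun x := (x.1.1, (x.1.2.1, x.2.1), (x.1.2.2, x.2.2))
  invFun x := ((x.1, (x.2.1.1, x.2.2.1)), (x.2.1.2, x.2.2.2))
  left_inv := by rintro ⟨⟨a, bl, cl⟩, br, cr⟩; rfl
  right_inv := by rintro ⟨a, ⟨bl, br⟩, cl, cr⟩; rfl



section AuxLemmas
open Polynomial

variable {n : Type*} [Fintype n] [DecidableEq n]

private lemma uconj_pow (U D : Matrix n n ℂ) (hU : U * Uᴴ = 1) (hU' : Uᴴ * U = 1) (k : ℕ) :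
    (U * D * Uᴴ) ^ k = U * D ^ k * Uᴴ := by
  induction k with
  | zero => simp only [pow_zero]; rw [Matrix.mul_one, hU]
  | succ k ih =>
    rw [pow_succ, ih, pow_succ]
    simp only [Matrix.mul_assoc]
    rw [← Matrix.mul_assoc Uᴴ U, hU', Matrix.one_mul]

private lemma uaeval_conj (U D : Matrix n n ℂ) (hU : U * Uᴴ = 1) (hU' : Uᴴ * U = 1)
    (p : ℂ[X]) :
    Polynomial.aeval (U * D * Uᴴ) p = U * Polynomial.aeval D p * Uᴴ := by
  induction p using Polynomial.induction_on' with
  | add p q hp hq =>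
    rw [map_add, map_add, hp, hq, Matrix.mul_add, Matrix.add_mul]
  | monomial k a =>
    rw [aeval_monomial, aeval_monomial, uconj_pow U D hU hU' k]
    simp [Algebra.algebraMap_eq_smul_one, smul_mul_assoc, mul_smul_comm]

private lemma uaeval_diagonal (f : n → ℂ) (p : ℂ[X]) :
    Polynomial.aeval (Matrix.diagonal f) p = Matrix.diagonal (fun i => p.eval (f i)) := by
  induction p using Polynomial.induction_on' with
  | add p q hp hq => simp [map_add, hp, hq, Matrix.diagonal_add, eval_add]
  | monomial k a =>
    rw [aeval_monomial]
    simp only [eval_monomial, Algebra.algebraMap_eq_smul_one, Matrix.diagonal_pow,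
      smul_mul_assoc, Matrix.one_mul, ← Matrix.diagonal_smul]
    exact congrArg _ (funext fun i => by simp)

private lemma utrace_conj (V M : Matrix n n ℂ) (hV' : Vᴴ * V = 1) :
    (V * M * Vᴴ).trace = M.trace := by
  rw [Matrix.trace_mul_cycle, hV', Matrix.one_mul]

private lemma utrace_aeval (V : Matrix n n ℂ) (hU : V * Vᴴ = 1) (hV' : Vᴴ * V = 1)
    (d : n → ℝ) (q : ℝ[X]) :
    (Polynomial.aeval (V * Matrix.diagonal (fun i => (d i : ℂ)) * Vᴴ)
      (q.map (algebraMap ℝ ℂ))).trace = ((∑ i, q.eval (d i) : ℝ) : ℂ) := by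
  rw [uaeval_conj V _ hU hV', utrace_conj V _ hV', uaeval_diagonal, Matrix.trace_diagonal]
  push_cast
  congr 1
  funext i
  rw [eval_map, show ((d i : ℂ)) = algebraMap ℝ ℂ (d i) from rfl, eval₂_at_apply]
  simp
private lemma uspectral (ρ : Matrix n n ℂ) (hρ : ρ.IsHermitian) :
    ρ = (hρ.eigenvectorUnitary : Matrix n n ℂ) *
        Matrix.diagonal (fun i => (hρ.eigenvalues i : ℂ)) *
        (hρ.eigenvectorUnitary : Matrix n n ℂ)ᴴ := by
  conv_lhs => rw [hρ.spectral_theorem]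
  rfl

private lemma u_mul_uH (ρ : Matrix n n ℂ) (hρ : ρ.IsHermitian) :
    (hρ.eigenvectorUnitary : Matrix n n ℂ) * (hρ.eigenvectorUnitary : Matrix n n ℂ)ᴴ = 1 := by
  rw [← Matrix.star_eq_conjTranspose]
  exact Matrix.mem_unitaryGroup_iff.mp hρ.eigenvectorUnitary.2

private lemma uH_mul_u (ρ : Matrix n n ℂ) (hρ : ρ.IsHermitian) :
    (hρ.eigenvectorUnitary : Matrix n n ℂ)ᴴ * (hρ.eigenvectorUnitary : Matrix n n ℂ) = 1 := by
  rw [← Matrix.star_eq_conjTranspose]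
  exact Matrix.mem_unitaryGroup_iff'.mp hρ.eigenvectorUnitary.2

private lemma sum_eval_eigenvalues (ρ : Matrix n n ℂ) (hρ : ρ.IsHermitian) (q : ℝ[X]) :
    ((∑ i, q.eval (hρ.eigenvalues i) : ℝ) : ℂ) =
      (Polynomial.aeval ρ (q.map (algebraMap ℝ ℂ))).trace := by
  conv_rhs => rw [uspectral ρ hρ]
  rw [utrace_aeval _ (u_mul_uH ρ hρ) (uH_mul_u ρ hρ)]

/-- trace is the sum of the eigenvalues -/
private lemma sum_eigenvalues_eq_trace (ρ : Matrix n n ℂ) (hρ : ρ.IsHermitian) :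
    ((∑ i, hρ.eigenvalues i : ℝ) : ℂ) = ρ.trace := by
  have h := sum_eval_eigenvalues ρ hρ Polynomial.X
  simpa using h

/-- well-definedness: any unitary diagonalization computes spectral sums -/
private lemma sum_g_eig_of_diag (ρ : Matrix n n ℂ) (hρ : ρ.IsHermitian)
    (V : Matrix n n ℂ) (hV : V * Vᴴ = 1) (hV' : Vᴴ * V = 1) (d : n → ℝ)
    (hd : ρ = V * Matrix.diagonal (fun i => (d i : ℂ)) * Vᴴ) (g : ℝ → ℝ) :
    ∑ i, g (hρ.eigenvalues i) = ∑ i, g (d i) := by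
  set s : Finset ℝ := Finset.univ.image hρ.eigenvalues ∪ Finset.univ.image d with hs
  set q : ℝ[X] := Lagrange.interpolate s id g with hq
  have hqe : ∀ x ∈ s, q.eval x = g x := by
    intro x hx
    exact Lagrange.eval_interpolate_at_node g (Set.injOn_id _) hx
  have h1 : ∑ i, g (hρ.eigenvalues i) = ∑ i, q.eval (hρ.eigenvalues i) := by
    refine (Finset.sum_congr rfl fun i _ => ?_).symm
    exact hqe _ (Finset.mem_union_left _ (Finset.mem_image_of_mem _ (Finset.mem_univ i)))
  have h2 : ∑ i, g (d i) = ∑ i, q.eval (d i) := by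
    refine (Finset.sum_congr rfl fun i _ => ?_).symm
    exact hqe _ (Finset.mem_union_right _ (Finset.mem_image_of_mem _ (Finset.mem_univ i)))
  rw [h1, h2]
  have h3 := sum_eval_eigenvalues ρ hρ q
  have h4 : (Polynomial.aeval ρ (q.map (algebraMap ℝ ℂ))).trace
      = ((∑ i, q.eval (d i) : ℝ) : ℂ) := by
    conv_lhs => rw [hd]
    exact utrace_aeval V hV hV' d q
  rw [h4] at h3
  exact_mod_cast h3
private lemma entropy_eq_neg_sum (ρ : Matrix n n ℂ) (h : ρ.IsHermitian) :
    entropy ρ = -∑ i, h.eigenvalues i * Real.log (h.eigenvalues i) := by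
  rw [entropy, dif_pos h]

private lemma entropy_zero : entropy (0 : Matrix n n ℂ) = 0 := by
  rw [entropy_eq_neg_sum 0 Matrix.isHermitian_zero]
  have h := sum_g_eig_of_diag (0 : Matrix n n ℂ) Matrix.isHermitian_zero 1 (by simp) (by simp)
    (fun _ => 0) (by simp) (fun x => x * Real.log x)
  simp only [h]
  simp

private lemma pow_mul_zero (M N : Matrix n n ℂ) (h1 : M * N = 0) (k : ℕ) :
    M ^ (k + 1) * N = 0 := by
  rw [pow_succ, Matrix.mul_assoc, h1, Matrix.mul_zero]

private lemma add_pow_orth (M N : Matrix n n ℂ) (h1 : M * N = 0) (h2 : N * M = 0) (k : ℕ) :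
    (M + N) ^ (k + 1) = M ^ (k + 1) + N ^ (k + 1) := by
  induction k with
  | zero => simp
  | succ k ih =>
    rw [pow_succ, ih, Matrix.add_mul, Matrix.mul_add, Matrix.mul_add,
      pow_mul_zero M N h1 k, pow_mul_zero N M h2 k, ← pow_succ, ← pow_succ]
    simp

private lemma trace_aeval_orth_add (M N : Matrix n n ℂ) (h1 : M * N = 0) (h2 : N * M = 0)
    (p : ℂ[X]) (h0 : p.coeff 0 = 0) :
    (Polynomial.aeval (M + N) p).trace =
      (Polynomial.aeval M p).trace + (Polynomial.aeval N p).trace := by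
  have key : ∀ (Z : Matrix n n ℂ), (Polynomial.aeval Z p).trace =
      ∑ i ∈ Finset.range (p.natDegree + 1), p.coeff i * (Z ^ i).trace := by
    intro Z
    rw [Polynomial.aeval_eq_sum_range, Matrix.trace_sum]
    exact Finset.sum_congr rfl fun i _ => by rw [Matrix.trace_smul, smul_eq_mul]
  rw [key, key, key, ← Finset.sum_add_distrib]
  refine Finset.sum_congr rfl fun i _ => ?_
  rcases Nat.eq_zero_or_pos i with h | h
  · subst h; rw [h0]; ring
  · obtain ⟨k, rfl⟩ : ∃ k, i = k + 1 := ⟨i - 1, (Nat.succ_pred_eq_of_pos h).symm⟩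
    rw [add_pow_orth M N h1 h2 k, Matrix.trace_add]; ring

private lemma entropy_add_orth (M N : Matrix n n ℂ) (hM : M.IsHermitian) (hN : N.IsHermitian)
    (h1 : M * N = 0) (h2 : N * M = 0) :
    entropy (M + N) = entropy M + entropy N := by
  have hMN : (M + N).IsHermitian := hM.add hN
  rw [entropy_eq_neg_sum _ hMN, entropy_eq_neg_sum _ hM, entropy_eq_neg_sum _ hN, ← neg_add]
  congr 1
  set g : ℝ → ℝ := fun x => x * Real.log x with hg
  set s : Finset ℝ := insert 0 (Finset.univ.image hM.eigenvalues ∪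
    Finset.univ.image hN.eigenvalues ∪ Finset.univ.image hMN.eigenvalues) with hs
  set q : ℝ[X] := Lagrange.interpolate s id g with hq
  have hqe : ∀ x ∈ s, q.eval x = g x := fun x hx =>
    Lagrange.eval_interpolate_at_node g (Set.injOn_id _) hx
  have h0 : (q.map (algebraMap ℝ ℂ)).coeff 0 = 0 := by
    rw [Polynomial.coeff_map, Polynomial.coeff_zero_eq_eval_zero,
      hqe 0 (Finset.mem_insert_self _ _)]
    simp [hg]
  have e1 : ∑ i, hMN.eigenvalues i * Real.log (hMN.eigenvalues i)
      = ∑ i, q.eval (hMN.eigenvalues i) :=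
    Finset.sum_congr rfl fun i _ => (hqe _ (Finset.mem_insert_of_mem
      (Finset.mem_union_right _ (Finset.mem_image_of_mem _ (Finset.mem_univ i))))).symm
  have e2 : ∑ i, hM.eigenvalues i * Real.log (hM.eigenvalues i)
      = ∑ i, q.eval (hM.eigenvalues i) :=
    Finset.sum_congr rfl fun i _ => (hqe _ (Finset.mem_insert_of_mem
      (Finset.mem_union_left _ (Finset.mem_union_left _
        (Finset.mem_image_of_mem _ (Finset.mem_univ i)))))).symm
  have e3 : ∑ i, hN.eigenvalues i * Real.log (hN.eigenvalues i)
      = ∑ i, q.eval (hN.eigenvalues i) :=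
    Finset.sum_congr rfl fun i _ => (hqe _ (Finset.mem_insert_of_mem
      (Finset.mem_union_left _ (Finset.mem_union_right _
        (Finset.mem_image_of_mem _ (Finset.mem_univ i)))))).symm
  rw [e1, e2, e3]
  have c1 := sum_eval_eigenvalues _ hMN q
  have c2 := sum_eval_eigenvalues M hM q
  have c3 := sum_eval_eigenvalues N hN q
  have := trace_aeval_orth_add M N h1 h2 (q.map (algebraMap ℝ ℂ)) h0
  rw [← c1, ← c2, ← c3] at this
  exact_mod_cast this
private lemma isHermitian_real_smul (σ : Matrix n n ℂ) (hσ : σ.IsHermitian) (p : ℝ) :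
    (p • σ).IsHermitian := by
  unfold Matrix.IsHermitian
  rw [Matrix.conjTranspose_smul, star_trivial, hσ.eq]

private lemma entropy_real_smul (σ : Matrix n n ℂ) (hσ : σ.IsHermitian) (htr : σ.trace = 1)
    (p : ℝ) :
    entropy (p • σ) = p * entropy σ - p * Real.log p := by
  have hps : (p • σ).IsHermitian := isHermitian_real_smul σ hσ p
  set U : Matrix n n ℂ := (hσ.eigenvectorUnitary : Matrix n n ℂ) with hU
  have hd : p • σ = U * Matrix.diagonal (fun i => ((p * hσ.eigenvalues i : ℝ) : ℂ)) * Uᴴ := by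
    conv_lhs => rw [uspectral σ hσ]
    rw [← smul_mul_assoc, ← mul_smul_comm, ← Matrix.diagonal_smul]
    have : (p • fun i => (hσ.eigenvalues i : ℂ)) = fun i => ((p * hσ.eigenvalues i : ℝ) : ℂ) :=
      funext fun i => by simp [Complex.real_smul]
    rw [this]
  have hsum := sum_g_eig_of_diag (p • σ) hps U (u_mul_uH σ hσ) (uH_mul_u σ hσ)
    (fun i => p * hσ.eigenvalues i) hd (fun x => x * Real.log x)
  have htr' : ∑ i, hσ.eigenvalues i = 1 := by
    have := sum_eigenvalues_eq_trace σ hσ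
    rw [htr] at this
    exact_mod_cast this
  rw [entropy_eq_neg_sum _ hps, entropy_eq_neg_sum _ hσ, hsum]
  have expand : ∀ i, (p * hσ.eigenvalues i) * Real.log (p * hσ.eigenvalues i)
      = p * (hσ.eigenvalues i * Real.log (hσ.eigenvalues i))
        + hσ.eigenvalues i * (p * Real.log p) := by
    intro i
    rcases eq_or_ne p 0 with hp | hp
    · simp [hp]
    rcases eq_or_ne (hσ.eigenvalues i) 0 with he | he
    · simp [he]
    rw [Real.log_mul hp he]
    ring
  rw [Finset.sum_congr rfl fun i _ => expand i, Finset.sum_add_distrib,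
    ← Finset.mul_sum, ← Finset.sum_mul, htr']
  ring

private lemma entropy_finset_sum {ι : Type*} (t : Finset ι) (M : ι → Matrix n n ℂ)
    (hherm : ∀ k, (M k).IsHermitian) (horth : ∀ k l, k ≠ l → M k * M l = 0) :
    entropy (∑ k ∈ t, M k) = ∑ k ∈ t, entropy (M k) := by
  classical
  induction t using Finset.induction_on with
  | empty => simpa using entropy_zero
  | insert a t' ha ih =>
    rw [Finset.sum_insert ha, Finset.sum_insert ha, ← ih]
    have hsum_herm : (∑ k ∈ t', M k).IsHermitian := by
      unfold Matrix.IsHermitian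
      rw [Matrix.conjTranspose_sum]
      exact Finset.sum_congr rfl fun l _ => (hherm l).eq
    exact entropy_add_orth _ _ (hherm a) hsum_herm
      (by rw [Finset.mul_sum]; exact Finset.sum_eq_zero fun l hl => horth a l (by rintro rfl; exact ha hl))
      (by rw [Finset.sum_mul]; exact Finset.sum_eq_zero fun l hl => horth l a (by rintro rfl; exact ha hl))
private lemma psd_add {M N : Matrix n n ℂ} (hM : M.PosSemidef) (hN : N.PosSemidef) :
    (M + N).PosSemidef := by
  exact hM.add hN

private lemma psd_finset_sum {ι : Type*} (t : Finset ι) (f : ι → Matrix n n ℂ)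
    (h : ∀ i, (f i).PosSemidef) : (∑ i ∈ t, f i).PosSemidef := by
  classical
  induction t using Finset.induction_on with
  | empty => simpa using Matrix.PosSemidef.zero
  | insert a t' ha ih =>
    rw [Finset.sum_insert ha]
    exact psd_add (h a) ih

section Comp

variable {big m J : Type*} [Fintype big] [Fintype m] [Fintype J] [DecidableEq big]
  [DecidableEq m]

private lemma comp_posSemidef (ρ : Matrix big big ℂ) (hρ : ρ.PosSemidef) (e : J → m → big) :
    Matrix.PosSemidef (Matrix.of fun x y => ∑ j, ρ (e j x) (e j y)) := by
  have key : (Matrix.of fun x y => ∑ j, ρ (e j x) (e j y)) =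
      ∑ j, (Matrix.of fun i x => if e j x = i then (1 : ℂ) else 0)ᴴ * ρ *
        (Matrix.of fun i x => if e j x = i then (1 : ℂ) else 0) := by
    ext x y
    rw [Matrix.sum_apply]
    refine Finset.sum_congr rfl fun j _ => ?_
    have inner : ∀ i, (ρ * (Matrix.of fun i x => if e j x = i then (1 : ℂ) else 0)) i y
        = ρ i (e j y) := by
      intro i
      rw [Matrix.mul_apply]
      simp [Matrix.of_apply, mul_ite]
    rw [Matrix.mul_assoc, Matrix.mul_apply]
    simp only [inner, Matrix.conjTranspose_apply, Matrix.of_apply, apply_ite (star : ℂ → ℂ),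
      star_one, star_zero, ite_mul, one_mul, zero_mul]
    simp
  rw [key]
  exact psd_finset_sum _ _ fun j => hρ.conjTranspose_mul_mul_same _

private lemma comp_trace (ρ : Matrix big big ℂ) (e : J → m → big)
    (f : J × m ≃ big) (hf : ∀ j x, f (j, x) = e j x) :
    Matrix.trace (Matrix.of fun x y => ∑ j, ρ (e j x) (e j y)) = ρ.trace := by
  unfold Matrix.trace Matrix.diag
  simp only [Matrix.of_apply]
  rw [Finset.sum_comm]
  have h1 : ∑ p : J × m, ρ (e p.1 p.2) (e p.1 p.2) = ∑ j : J, ∑ x : m, ρ (e j x) (e j x) :=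
    Fintype.sum_prod_type (f := fun p : J × m => ρ (e p.1 p.2) (e p.1 p.2))
  rw [← h1]
  exact Fintype.sum_equiv f _ _ fun p => by rw [← hf p.1 p.2]

end Comp

private lemma orth_lift {X Y : Type*} [Fintype X] [Fintype Y]
    {σ τ : Matrix (X × Y) (X × Y) ℂ} (hσ : σ.PosSemidef) (hτ : τ.PosSemidef)
    (h : ptraceLeft σ * ptraceLeft τ = 0) : σ * τ = 0 := by
  obtain ⟨S, hS⟩ : ∃ S : Matrix (X × Y) (X × Y) ℂ, σ = Sᴴ * S := by
    open scoped MatrixOrder in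
    exact (CStarAlgebra.nonneg_iff_eq_star_mul_self.mp hσ.nonneg).imp fun _ h => h
  obtain ⟨T, hT⟩ : ∃ T : Matrix (X × Y) (X × Y) ℂ, τ = Tᴴ * T := by
    open scoped MatrixOrder in
    exact (CStarAlgebra.nonneg_iff_eq_star_mul_self.mp hτ.nonneg).imp fun _ h => h
  set Am : Matrix ((X × Y) × X) Y ℂ := Matrix.of fun kx y => S kx.1 (kx.2, y) with hAm
  set Bm : Matrix ((X × Y) × X) Y ℂ := Matrix.of fun lx y => T lx.1 (lx.2, y) with hBm
  have hgen : ∀ (W : Matrix (X × Y) (X × Y) ℂ) (Wm : Matrix ((X × Y) × X) Y ℂ)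
      (R : Matrix (X × Y) (X × Y) ℂ), W = Rᴴ * R → Wm = (Matrix.of fun kx y => R kx.1 (kx.2, y)) →
      ptraceLeft W = Wmᴴ * Wm := by
    intro W Wm R hR hWm
    funext y y'
    have rhs : (Wmᴴ * Wm) y y' = ∑ kx : (X × Y) × X, star (R kx.1 (kx.2, y)) * R kx.1 (kx.2, y') := by
      rw [Matrix.mul_apply]
      exact Finset.sum_congr rfl fun kx _ => by simp [hWm, Matrix.conjTranspose_apply]
    have lhs : ptraceLeft W y y' = ∑ x : X, ∑ k : X × Y, star (R k (x, y)) * R k (x, y') := by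
      show ∑ x : X, W (x, y) (x, y') = _
      exact Finset.sum_congr rfl fun x _ => by
        rw [hR, Matrix.mul_apply]
        exact Finset.sum_congr rfl fun k _ => by rw [Matrix.conjTranspose_apply]
    rw [lhs, rhs,
      Fintype.sum_prod_type (f := fun kx : (X × Y) × X => star (R kx.1 (kx.2, y)) * R kx.1 (kx.2, y'))]
    exact Finset.sum_comm
  have hA : ptraceLeft σ = Amᴴ * Am := hgen σ Am S hS hAm
  have hB : ptraceLeft τ = Bmᴴ * Bm := hgen τ Bm T hT hBm
  have key : Am * Bmᴴ = 0 := by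
    have s1 : Am * (Bmᴴ * Bm) = 0 := by
      rw [← Matrix.conjTranspose_mul_self_mul_eq_zero Am, ← hA, ← hB]
      exact h
    have s2 : (Bmᴴ * Bm) * Amᴴ = 0 := by
      have := congrArg Matrix.conjTranspose s1
      simpa [Matrix.conjTranspose_mul, Matrix.mul_assoc] using this
    have s3 : Bm * Amᴴ = 0 := (Matrix.conjTranspose_mul_self_mul_eq_zero Bm Amᴴ).mp s2
    have := congrArg Matrix.conjTranspose s3
    simpa [Matrix.conjTranspose_mul] using this
  have hST : S * Tᴴ = 0 := by
    funext k l
    have hentry : ∀ x : X, (Am * Bmᴴ) (k, x) (l, x) = 0 := fun x => by rw [key]; rfl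
    have e1 : ∀ x, (Am * Bmᴴ) (k, x) (l, x) = ∑ y : Y, S k (x, y) * star (T l (x, y)) := fun x => by
      rw [Matrix.mul_apply]
      exact Finset.sum_congr rfl fun y _ => by simp [hAm, hBm, Matrix.conjTranspose_apply]
    have e2 : (S * Tᴴ) k l = ∑ m' : X × Y, S k m' * star (T l m') := by
      rw [Matrix.mul_apply]
      exact Finset.sum_congr rfl fun m' _ => by rw [Matrix.conjTranspose_apply]
    have : (S * Tᴴ) k l = ∑ x : X, (Am * Bmᴴ) (k, x) (l, x) := by
      rw [e2, Fintype.sum_prod_type (f := fun m' : X × Y => S k m' * star (T l m'))]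
      exact Finset.sum_congr rfl fun x _ => (e1 x).symm
    rw [this]
    exact Finset.sum_eq_zero fun x _ => hentry x
  rw [hS, hT, show Sᴴ * S * (Tᴴ * T) = Sᴴ * (S * Tᴴ) * T by simp only [Matrix.mul_assoc],
    hST, Matrix.mul_zero, Matrix.zero_mul]

section Marginals

variable {A B C : Type*} [Fintype A] [Fintype B] [Fintype C]
  [DecidableEq A] [DecidableEq B] [DecidableEq C]
variable (ρ : Matrix (A × B × C) (A × B × C) ℂ)

private lemma margAB_comp :
    margAB ρ = Matrix.of fun x y => ∑ c : C, ρ (x.1, x.2, c) (y.1, y.2, c) := rfl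

private lemma margAC_comp :
    margAC ρ = Matrix.of fun x y => ∑ b : B, ρ (x.1, b, x.2) (y.1, b, y.2) := rfl

private lemma margB_comp :
    margB ρ = Matrix.of fun b b' => ∑ j : A × C, ρ (j.1, b, j.2) (j.1, b', j.2) := by
  funext b b'
  show ∑ a, ∑ c, ρ (a, b, c) (a, b', c) = _
  rw [Matrix.of_apply,
    Fintype.sum_prod_type (f := fun j : A × C => ρ (j.1, b, j.2) (j.1, b', j.2))]

private lemma margC_comp :
    margC ρ = Matrix.of fun c c' => ∑ j : A × B, ρ (j.1, j.2, c) (j.1, j.2, c') := by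
  funext c c'
  show ∑ a, ∑ b, ρ (a, b, c) (a, b, c') = _
  rw [Matrix.of_apply,
    Fintype.sum_prod_type (f := fun j : A × B => ρ (j.1, j.2, c) (j.1, j.2, c'))]

variable {ρ}

private lemma margAB_posSemidef (hρ : ρ.PosSemidef) : (margAB ρ).PosSemidef := by
  rw [margAB_comp]; exact comp_posSemidef ρ hρ (fun (c : C) (x : A × B) => (x.1, x.2, c))

private lemma margAC_posSemidef (hρ : ρ.PosSemidef) : (margAC ρ).PosSemidef := by
  rw [margAC_comp]; exact comp_posSemidef ρ hρ (fun (b : B) (x : A × C) => (x.1, b, x.2))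

private lemma margB_posSemidef (hρ : ρ.PosSemidef) : (margB ρ).PosSemidef := by
  rw [margB_comp]; exact comp_posSemidef ρ hρ (fun (j : A × C) (b : B) => (j.1, b, j.2))

private lemma margC_posSemidef (hρ : ρ.PosSemidef) : (margC ρ).PosSemidef := by
  rw [margC_comp]; exact comp_posSemidef ρ hρ (fun (j : A × B) (c : C) => (j.1, j.2, c))

variable (ρ)

private lemma margAB_trace : (margAB ρ).trace = ρ.trace := by
  rw [margAB_comp]
  exact comp_trace ρ _ ⟨fun p => (p.2.1, p.2.2, p.1), fun i => (i.2.2, (i.1, i.2.1)),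
    by rintro ⟨c, a, b⟩; rfl, by rintro ⟨a, b, c⟩; rfl⟩ (fun j x => rfl)

private lemma margAC_trace : (margAC ρ).trace = ρ.trace := by
  rw [margAC_comp]
  exact comp_trace ρ _ ⟨fun p => (p.2.1, p.1, p.2.2), fun i => (i.2.1, (i.1, i.2.2)),
    by rintro ⟨b, a, c⟩; rfl, by rintro ⟨a, b, c⟩; rfl⟩ (fun j x => rfl)

private lemma margB_trace : (margB ρ).trace = ρ.trace := by
  rw [margB_comp]
  exact comp_trace ρ _ ⟨fun p => (p.1.1, p.2, p.1.2), fun i => ((i.1, i.2.2), i.2.1),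
    by rintro ⟨⟨a, c⟩, b⟩; rfl, by rintro ⟨a, b, c⟩; rfl⟩ (fun j x => rfl)

private lemma margC_trace : (margC ρ).trace = ρ.trace := by
  rw [margC_comp]
  exact comp_trace ρ _ ⟨fun p => (p.1.1, p.1.2, p.2), fun i => ((i.1, i.2.1), i.2.2),
    by rintro ⟨⟨a, b⟩, c⟩; rfl, by rintro ⟨a, b, c⟩; rfl⟩ (fun j x => rfl)

private lemma margB_ptrace : ptraceLeft (margAB ρ) = margB ρ := rfl

private lemma margC_ptrace : ptraceLeft (margAC ρ) = margC ρ := rfl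

variable {K : ℕ} (p : Fin K → ℝ) (ρs : Fin K → Matrix (A × B × C) (A × B × C) ℂ)

private lemma margAB_mix : margAB (∑ k, p k • ρs k) = ∑ k, p k • margAB (ρs k) := by
  funext x y
  simp only [margAB, Matrix.sum_apply, Matrix.smul_apply, Finset.smul_sum]
  exact Finset.sum_comm

private lemma margAC_mix : margAC (∑ k, p k • ρs k) = ∑ k, p k • margAC (ρs k) := by
  funext x y
  simp only [margAC, Matrix.sum_apply, Matrix.smul_apply, Finset.smul_sum]
  exact Finset.sum_comm

private lemma margB_mix : margB (∑ k, p k • ρs k) = ∑ k, p k • margB (ρs k) := by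
  funext b b'
  simp only [margB, Matrix.sum_apply, Matrix.smul_apply, Finset.smul_sum]
  trans ∑ a : A, ∑ k : Fin K, ∑ c : C, p k • ρs k (a, b, c) (a, b', c)
  · exact Finset.sum_congr rfl fun a _ => Finset.sum_comm
  · exact Finset.sum_comm

private lemma margC_mix : margC (∑ k, p k • ρs k) = ∑ k, p k • margC (ρs k) := by
  funext c c'
  simp only [margC, Matrix.sum_apply, Matrix.smul_apply, Finset.smul_sum]
  trans ∑ a : A, ∑ k : Fin K, ∑ b : B, p k • ρs k (a, b, c) (a, b, c')
  · exact Finset.sum_congr rfl fun a _ => Finset.sum_comm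
  · exact Finset.sum_comm

end Marginals

private lemma entropy_mix {n : Type*} [Fintype n] [DecidableEq n] {K : ℕ} (p : Fin K → ℝ)
    (σ : Fin K → Matrix n n ℂ) (hherm : ∀ k, (σ k).IsHermitian) (htr : ∀ k, (σ k).trace = 1)
    (horth : ∀ k l, k ≠ l → σ k * σ l = 0) :
    entropy (∑ k, p k • σ k) = ∑ k, (p k * entropy (σ k) - p k * Real.log (p k)) := by
  rw [entropy_finset_sum Finset.univ (fun k => p k • σ k)
      (fun k => isHermitian_real_smul _ (hherm k) _)
      (fun k l hkl => by
        rw [smul_mul_assoc, mul_smul_comm, horth k l hkl, smul_zero, smul_zero])]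
  exact Finset.sum_congr rfl fun k _ => entropy_real_smul _ (hherm k) (htr k) _

end AuxLemmas

/-- if `ρ_ABC = ∑ₖ pₖ ρᵏ_ABC` is a convex combination of states
whose `B`-marginals are mutually orthogonal and whose `C`-marginals are
mutually orthogonal, then `T^(a)(ρ_ABC) = ∑ₖ pₖ T^(a)(ρᵏ_ABC)`. -/
theorem Ta_affine_of_orthogonal_marginals {A B C : Type*}
    [Fintype A] [Fintype B] [Fintype C]
    [DecidableEq A] [DecidableEq B] [DecidableEq C]
    (ρ : Matrix (A × B × C) (A × B × C) ℂ) (hρ : IsState ρ)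
    (K : ℕ) (p : Fin K → ℝ) (ρs : Fin K → Matrix (A × B × C) (A × B × C) ℂ)
    (hp : ∀ k, 0 ≤ p k) (hp1 : ∑ k, p k = 1)
    (hs : ∀ k, IsState (ρs k)) (hdec : ρ = ∑ k, p k • ρs k)
    (horthB : ∀ k k', k ≠ k' → margB (ρs k) * margB (ρs k') = 0)
    (horthC : ∀ k k', k ≠ k' → margC (ρs k) * margC (ρs k') = 0) :
    Ta ρ = ∑ k, p k * Ta (ρs k) := by
  have hABo : ∀ k l, k ≠ l → margAB (ρs k) * margAB (ρs l) = 0 := fun k l h =>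
    orth_lift (margAB_posSemidef (hs k).1) (margAB_posSemidef (hs l).1)
      (by rw [margB_ptrace, margB_ptrace]; exact horthB k l h)
  have hACo : ∀ k l, k ≠ l → margAC (ρs k) * margAC (ρs l) = 0 := fun k l h =>
    orth_lift (margAC_posSemidef (hs k).1) (margAC_posSemidef (hs l).1)
      (by rw [margC_ptrace, margC_ptrace]; exact horthC k l h)
  have eAB : entropy (margAB ρ) = ∑ k, (p k * entropy (margAB (ρs k)) - p k * Real.log (p k)) := by
    rw [hdec, margAB_mix]
    exact entropy_mix p _ (fun k => (margAB_posSemidef (hs k).1).1)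
      (fun k => by rw [margAB_trace]; exact (hs k).2) hABo
  have eAC : entropy (margAC ρ) = ∑ k, (p k * entropy (margAC (ρs k)) - p k * Real.log (p k)) := by
    rw [hdec, margAC_mix]
    exact entropy_mix p _ (fun k => (margAC_posSemidef (hs k).1).1)
      (fun k => by rw [margAC_trace]; exact (hs k).2) hACo
  have eB : entropy (margB ρ) = ∑ k, (p k * entropy (margB (ρs k)) - p k * Real.log (p k)) := by
    rw [hdec, margB_mix]
    exact entropy_mix p _ (fun k => (margB_posSemidef (hs k).1).1)
      (fun k => by rw [margB_trace]; exact (hs k).2) horthB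
  have eC : entropy (margC ρ) = ∑ k, (p k * entropy (margC (ρs k)) - p k * Real.log (p k)) := by
    rw [hdec, margC_mix]
    exact entropy_mix p _ (fun k => (margC_posSemidef (hs k).1).1)
      (fun k => by rw [margC_trace]; exact (hs k).2) horthC
  rw [Ta, eAB, eAC, eB, eC, ← Finset.sum_add_distrib, ← Finset.sum_sub_distrib,
    ← Finset.sum_sub_distrib]
  exact Finset.sum_congr rfl fun k _ => by rw [Ta]; ring

end
end

section
/- Suppose H_B = H_{B^L} ⊗ H_{B^R} and H_C = H_{C^L} ⊗ H_{C^R}, and set H_Y = H_{B^L} ⊗ H_{C^L} and H_Z = H_{B^R} ⊗ H_{C^R} (so that H_Y ⊗ H_Z ≅ H_B ⊗ H_C). Then every state of the form ρ_ABC = |ψ_AY⟩⟨ψ_AY| ⊗ ρ_Z, where |ψ_AY⟩ is a unit vector in H_A ⊗ H_Y and ρ_Z is a state on H_Z (viewed as a state on H_A ⊗ H_B ⊗ H_C via the factor reordering), satisfies T^(a)(ρ_ABC) = 0. -/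
set_option maxRecDepth 8000


open Matrix Kronecker
open scoped Classical ComplexOrder

noncomputable section

section MyLemmas
open Polynomial


variable {n m : Type*} [Fintype n] [DecidableEq n] [Fintype m] [DecidableEq m]

lemma my_charpoly_conj (P Q M : Matrix n n ℂ) (hPQ : P * Q = 1) :
    (P * M * Q).charpoly = M.charpoly := by
  have hQP : Q * P = 1 := by
    have := mul_eq_one_comm.mp hPQ
    exact this
  have hcm : charmatrix (P * M * Q)
      = (P.map C) * charmatrix M * (Q.map C) := by
    have h1 : (P.map C) * (Matrix.scalar n (X : ℂ[X])) * (Q.map C)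
        = Matrix.scalar n (X : ℂ[X]) := by
      rw [← Matrix.scalar_commute (X : ℂ[X]) (fun r => (Commute.all _ _)) (P.map C)]
      rw [mul_assoc, ← Matrix.map_mul, hPQ]
      simp [Matrix.scalar]
    calc charmatrix (P * M * Q)
        = Matrix.scalar n (X : ℂ[X]) - (P * M * Q).map C := rfl
      _ = (P.map C) * (Matrix.scalar n (X : ℂ[X])) * (Q.map C)
            - (P.map C) * (M.map C) * (Q.map C) := by
          rw [h1, Matrix.map_mul, Matrix.map_mul]
      _ = (P.map C) * charmatrix M * (Q.map C) := by
          unfold charmatrix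
          rw [Matrix.mul_sub, Matrix.sub_mul]
          rfl
  have : (P.map C) * (Q.map C) = 1 := by rw [← Matrix.map_mul, hPQ]; simp
  have hQPc : (Q.map C) * (P.map C) = (1 : Matrix n n ℂ[X]) := by
    rw [← Matrix.map_mul, hQP]; simp
  rw [Matrix.charpoly, hcm, det_mul, det_mul, mul_comm, ← mul_assoc, ← det_mul, hQPc]
  simp [Matrix.charpoly]

lemma my_charpoly_diagonal (d : n → ℂ) :
    (Matrix.diagonal d).charpoly = ∏ i, (X - C (d i)) := by
  rw [Matrix.charpoly]
  have : charmatrix (Matrix.diagonal d) = Matrix.diagonal (fun i => X - C (d i)) := by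
    ext i j
    by_cases h : i = j
    · subst h; simp [charmatrix_apply_eq]
    · simp [charmatrix_apply_ne _ _ _ h, Matrix.diagonal_apply_ne _ h]
  rw [this, det_diagonal]

lemma my_charpoly_hermitian {A : Matrix n n ℂ} (hA : A.IsHermitian) :
    A.charpoly = ∏ i, (X - C (hA.eigenvalues i : ℂ)) := by
  have hU : (hA.eigenvectorUnitary : Matrix n n ℂ) * star (hA.eigenvectorUnitary : Matrix n n ℂ) = 1 :=
    (Matrix.mem_unitaryGroup_iff).mp (hA.eigenvectorUnitary).2
  conv_lhs => rw [hA.spectral_theorem, Unitary.conjStarAlgAut_apply]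
  rw [my_charpoly_conj _ _ _ hU, my_charpoly_diagonal]
  rfl

variable {n m : Type*} [Fintype n] [DecidableEq n] [Fintype m] [DecidableEq m]

-- multiset of eigenvalues from charpoly factorization
lemma my_prod_linear_eq {α : Type*} [Fintype α] (d : α → ℝ) :
    (∏ i, (X - C ((d i : ℂ)))) =
      ((Finset.univ.val.map (fun i => ((d i : ℂ)))).map (fun a => X - C a)).prod := by
  rw [Multiset.map_map]
  rfl

lemma my_roots_prod_linear {α : Type*} [Fintype α] (d : α → ℝ) :
    (∏ i, (X - C ((d i : ℂ)))).roots = Finset.univ.val.map (fun i => ((d i : ℂ))) := by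
  rw [my_prod_linear_eq, roots_multiset_prod_X_sub_C]


lemma my_msum {α : Type*} [Fintype α] (d : α → ℝ) (g : ℝ → ℝ) :
    ((Finset.univ.val.map (fun i => ((d i : ℂ)))).map (fun z : ℂ => g z.re)).sum
      = ∑ i, g (d i) := by
  rw [Multiset.map_map]
  rw [Finset.sum_eq_multiset_sum]
  congr 1

lemma my_sum_eig {A : Matrix n n ℂ} (hA : A.IsHermitian) {α : Type*} [Fintype α]
    (d : α → ℝ) (h : A.charpoly = ∏ i, (X - C ((d i : ℂ)))) (g : ℝ → ℝ) :
    ∑ i, g (hA.eigenvalues i) = ∑ i, g (d i) := by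
  have h2 : (∏ i, (X - C ((hA.eigenvalues i : ℂ)))) = ∏ i, (X - C ((d i : ℂ))) := by
    rw [← my_charpoly_hermitian hA, h]
  have h3 : Finset.univ.val.map (fun i => ((hA.eigenvalues i : ℂ)))
      = Finset.univ.val.map (fun i => ((d i : ℂ))) := by
    rw [← my_roots_prod_linear hA.eigenvalues, ← my_roots_prod_linear d, h2]
  have h4 := congrArg (fun M : Multiset ℂ => (M.map (fun z : ℂ => g z.re)).sum) h3
  rw [my_msum, my_msum] at h4
  exact h4

lemma my_sum_eig_pair {A : Matrix n n ℂ} {B : Matrix m m ℂ}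
    (hA : A.IsHermitian) (hB : B.IsHermitian)
    (h : A.charpoly * X ^ (Fintype.card m) = B.charpoly * X ^ (Fintype.card n))
    (g : ℝ → ℝ) (hg : g 0 = 0) :
    ∑ i, g (hA.eigenvalues i) = ∑ i, g (hB.eigenvalues i) := by
  have hAm : A.charpoly ≠ 0 := A.charpoly_monic.ne_zero
  have hBm : B.charpoly ≠ 0 := B.charpoly_monic.ne_zero
  have hX : (X : ℂ[X]) ^ (Fintype.card m) ≠ 0 := pow_ne_zero _ X_ne_zero
  have hX' : (X : ℂ[X]) ^ (Fintype.card n) ≠ 0 := pow_ne_zero _ X_ne_zero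
  have hr := congrArg Polynomial.roots h
  rw [roots_mul (mul_ne_zero hAm hX), roots_mul (mul_ne_zero hBm hX'),
    roots_X_pow, roots_X_pow, my_charpoly_hermitian hA, my_charpoly_hermitian hB,
    my_roots_prod_linear, my_roots_prod_linear] at hr
  have h4 := congrArg (fun M : Multiset ℂ => (M.map (fun z : ℂ => g z.re)).sum) hr
  simp only [Multiset.map_add, Multiset.sum_add, Multiset.map_nsmul, Multiset.map_singleton,
    Multiset.sum_nsmul, Multiset.sum_singleton, Complex.zero_re, hg, smul_zero, add_zero] at h4
  rw [my_msum, my_msum] at h4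
  exact h4

lemma my_entropy_eq_of_charpoly {A : Matrix n n ℂ} (hA : A.IsHermitian)
    {α : Type*} [Fintype α] (d : α → ℝ) (h : A.charpoly = ∏ i, (X - C ((d i : ℂ)))) :
    entropy A = -∑ i, d i * Real.log (d i) := by
  rw [entropy, dif_pos hA]
  congr 1
  exact my_sum_eig hA d h (fun x => x * Real.log x)

lemma my_entropy_pair {A : Matrix n n ℂ} {B : Matrix m m ℂ}
    (hA : A.IsHermitian) (hB : B.IsHermitian)
    (h : A.charpoly * X ^ (Fintype.card m) = B.charpoly * X ^ (Fintype.card n)) :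
    entropy A = entropy B := by
  rw [entropy, entropy, dif_pos hA, dif_pos hB]
  congr 1
  exact my_sum_eig_pair hA hB h (fun x => x * Real.log x) (by simp)

lemma my_sum_eigenvalues {A : Matrix n n ℂ} (hA : A.IsHermitian) :
    ((∑ i, hA.eigenvalues i : ℝ) : ℂ) = A.trace := by
  rw [Matrix.trace_eq_sum_roots_charpoly, my_charpoly_hermitian hA, my_roots_prod_linear]
  rw [Finset.sum_eq_multiset_sum]
  rw [show (((Multiset.map hA.eigenvalues Finset.univ.val).sum : ℝ) : ℂ)
      = ((Multiset.map hA.eigenvalues Finset.univ.val).map (Complex.ofRealHom : ℝ →+* ℂ)).sum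
      from map_multiset_sum Complex.ofRealHom _, Multiset.map_map]
  rfl

lemma my_charpoly_transpose (M : Matrix n n ℂ) : (Mᵀ).charpoly = M.charpoly := by
  rw [Matrix.charpoly, Matrix.charpoly]
  have : charmatrix (Mᵀ) = (charmatrix M)ᵀ := by
    ext i j
    by_cases h : i = j
    · subst h; simp [charmatrix_apply_eq]
    · simp [charmatrix_apply_ne _ _ _ h, charmatrix_apply_ne _ _ _ (Ne.symm h)]
  rw [this, Matrix.det_transpose]

lemma my_eval_charpoly (M : Matrix n n ℂ) (r : ℂ) :
    (M.charpoly).eval r = (r • (1 : Matrix n n ℂ) - M).det := by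
  rw [Matrix.charpoly, ← coe_evalRingHom, RingHom.map_det]
  congr 1
  ext i j
  by_cases h : i = j
  · subst h; simp [charmatrix_apply_eq, Matrix.one_apply]
  · simp [charmatrix_apply_ne _ _ _ h, Matrix.one_apply_ne h]

lemma my_det_id {k : Type*} [Fintype k] [DecidableEq k]
    (A : Matrix m k ℂ) (B : Matrix k m ℂ) {x : ℂ} (hx : x ≠ 0) :
    (x • (1 : Matrix m m ℂ) - A * B).det * x ^ (Fintype.card k)
      = (x • (1 : Matrix k k ℂ) - B * A).det * x ^ (Fintype.card m) := by
  have hInv : Invertible (x • (1 : Matrix m m ℂ)) :=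
    ⟨x⁻¹ • 1, by simp [smul_smul, mul_inv_cancel₀ hx, inv_mul_cancel₀ hx], by simp [smul_smul, mul_inv_cancel₀ hx, inv_mul_cancel₀ hx]⟩
  have hinvOf : ⅟(x • (1 : Matrix m m ℂ)) = x⁻¹ • (1 : Matrix m m ℂ) :=
    invOf_eq_right_inv (by simp [smul_smul, mul_inv_cancel₀ hx, inv_mul_cancel₀ hx])
  have e1 : (Matrix.fromBlocks (x • (1 : Matrix m m ℂ)) A B (1 : Matrix k k ℂ)).det
      = (x • (1 : Matrix m m ℂ) - A * B).det := Matrix.det_fromBlocks_one₂₂ _ _ _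
  have e2 : (Matrix.fromBlocks (x • (1 : Matrix m m ℂ)) A B (1 : Matrix k k ℂ)).det
      = (x • (1 : Matrix m m ℂ)).det * ((1 : Matrix k k ℂ) - B * ⅟(x • (1 : Matrix m m ℂ)) * A).det :=
    Matrix.det_fromBlocks₁₁ _ _ _ _
  have hBA : B * (x⁻¹ • (1 : Matrix m m ℂ)) * A = x⁻¹ • (B * A) := by
    rw [Matrix.mul_smul, Matrix.mul_one, Matrix.smul_mul]
  have hdm : (x • (1 : Matrix m m ℂ)).det = x ^ (Fintype.card m) := by
    simp [Matrix.det_smul]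
  have hdk : (x • (1 : Matrix k k ℂ) - B * A).det
      = x ^ (Fintype.card k) * ((1 : Matrix k k ℂ) - x⁻¹ • (B * A)).det := by
    have : x • (1 : Matrix k k ℂ) - B * A = x • ((1 : Matrix k k ℂ) - x⁻¹ • (B * A)) := by
      rw [smul_sub, smul_smul, mul_inv_cancel₀ hx, one_smul]
    rw [this, Matrix.det_smul]
  rw [← e1 ] at *
  rw [e2, hinvOf, hBA, hdm, hdk]
  ring

lemma my_charpoly_mul_comm_rect {k : Type*} [Fintype k] [DecidableEq k]
    (A : Matrix m k ℂ) (B : Matrix k m ℂ) :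
    (A * B).charpoly * X ^ (Fintype.card k) = (B * A).charpoly * X ^ (Fintype.card m) := by
  have h : ((A * B).charpoly * X ^ (Fintype.card k)
      - (B * A).charpoly * X ^ (Fintype.card m)) = 0 := by
    apply Polynomial.eq_zero_of_infinite_isRoot
    apply Set.Infinite.mono (s := {x : ℂ | x ≠ 0})
    · intro x hx
      have hx' : x ≠ 0 := hx
      simp only [Set.mem_setOf_eq, Polynomial.IsRoot, eval_sub, eval_mul, eval_pow, eval_X,
        my_eval_charpoly]
      rw [my_det_id A B hx']
      ring
    · have h0 : ({0} : Set ℂ)ᶜ.Infinite := (Set.finite_singleton 0).infinite_compl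
      have : {x : ℂ | x ≠ 0} = ({0} : Set ℂ)ᶜ := by ext z; simp
      rw [this]; exact h0
  exact sub_eq_zero.mp h

open Kronecker

lemma my_kron_herm {M : Matrix n n ℂ} {N : Matrix m m ℂ}
    (hM : M.IsHermitian) (hN : N.IsHermitian) : (M ⊗ₖ N).IsHermitian := by
  ext ⟨i, j⟩ ⟨i', j'⟩
  simp only [Matrix.conjTranspose_apply, Matrix.kroneckerMap_apply, star_mul']
  rw [hM.apply, hN.apply, mul_comm]

lemma my_charpoly_kronecker {M : Matrix n n ℂ} {N : Matrix m m ℂ}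
    (hM : M.IsHermitian) (hN : N.IsHermitian) :
    (M ⊗ₖ N).charpoly
      = ∏ p : n × m, (X - C ((hM.eigenvalues p.1 * hN.eigenvalues p.2 : ℝ) : ℂ)) := by
  set U := (hM.eigenvectorUnitary : Matrix n n ℂ)
  set V := (hN.eigenvectorUnitary : Matrix m m ℂ)
  have hU : U * star U = 1 := (Matrix.mem_unitaryGroup_iff).mp (hM.eigenvectorUnitary).2
  have hV : V * star V = 1 := (Matrix.mem_unitaryGroup_iff).mp (hN.eigenvectorUnitary).2
  set D := Matrix.diagonal ((RCLike.ofReal : ℝ → ℂ) ∘ hM.eigenvalues) with hD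
  set E := Matrix.diagonal ((RCLike.ofReal : ℝ → ℂ) ∘ hN.eigenvalues) with hE
  have key : M ⊗ₖ N = (U ⊗ₖ V) * (D ⊗ₖ E) * (star U ⊗ₖ star V) := by
    rw [← Matrix.mul_kronecker_mul, ← Matrix.mul_kronecker_mul]
    conv_lhs => rw [hM.spectral_theorem, hN.spectral_theorem]
    rfl
  have hPQ : (U ⊗ₖ V) * (star U ⊗ₖ star V) = 1 := by
    rw [← Matrix.mul_kronecker_mul, hU, hV, Matrix.one_kronecker_one]
  rw [key, my_charpoly_conj _ _ _ hPQ, hD, hE, Matrix.diagonal_kronecker_diagonal,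
    my_charpoly_diagonal]
  apply Finset.prod_congr rfl
  intro p _
  push_cast
  rfl

lemma my_xlogx (a b : ℝ) :
    a * b * Real.log (a * b) = b * (a * Real.log a) + a * (b * Real.log b) := by
  rcases eq_or_ne a 0 with rfl | ha
  · simp
  rcases eq_or_ne b 0 with rfl | hb
  · simp
  rw [Real.log_mul ha hb]
  ring

lemma my_entropy_kronecker {M : Matrix n n ℂ} {N : Matrix m m ℂ}
    (hM : M.IsHermitian) (hN : N.IsHermitian) :
    entropy (M ⊗ₖ N)
      = (∑ j, hN.eigenvalues j) * entropy M + (∑ i, hM.eigenvalues i) * entropy N := by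
  rw [my_entropy_eq_of_charpoly (my_kron_herm hM hN)
      (fun p : n × m => hM.eigenvalues p.1 * hN.eigenvalues p.2)
      (my_charpoly_kronecker hM hN)]
  rw [entropy, dif_pos hM, entropy, dif_pos hN]
  rw [Fintype.sum_prod_type]
  have : ∀ i, ∑ j, (hM.eigenvalues i * hN.eigenvalues j)
        * Real.log (hM.eigenvalues i * hN.eigenvalues j)
      = (∑ j, hN.eigenvalues j * (hM.eigenvalues i * Real.log (hM.eigenvalues i)))
        + ∑ j, hM.eigenvalues i * (hN.eigenvalues j * Real.log (hN.eigenvalues j)) := by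
    intro i
    rw [← Finset.sum_add_distrib]
    exact Finset.sum_congr rfl fun j _ => my_xlogx _ _
  simp only [this]
  rw [Finset.sum_add_distrib]
  have e1 : ∀ (b : m → ℝ) (c : n → ℝ), (∑ x, ∑ j, b j * c x) = (∑ j, b j) * ∑ x, c x := by
    intro b c
    rw [Finset.sum_comm, ← Finset.sum_mul_sum]
  have e2 : ∀ (b : m → ℝ) (c : n → ℝ), (∑ x, ∑ j, c x * b j) = (∑ x, c x) * ∑ j, b j := by
    intro b c
    rw [← Finset.sum_mul_sum]
  rw [e1 (fun j => hN.eigenvalues j) (fun x => hM.eigenvalues x * Real.log (hM.eigenvalues x)),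
    e2 (fun j => hN.eigenvalues j * Real.log (hN.eigenvalues j)) (fun x => hM.eigenvalues x)]
  ring

def Pmat {α β : Type*} [Fintype β] (φ : α × β → ℂ) : Matrix α α ℂ :=
  fun a a' => ∑ y, φ (a, y) * star (φ (a', y))

def Qmat {α β : Type*} [Fintype α] (φ : α × β → ℂ) : Matrix β β ℂ :=
  fun y y' => ∑ a, φ (a, y) * star (φ (a, y'))

variable {α β : Type*} [Fintype α] [Fintype β] [DecidableEq α] [DecidableEq β]

lemma Pmat_eq (φ : α × β → ℂ) :
    Pmat φ = (Matrix.of fun a y => φ (a, y)) * (Matrix.of fun a y => φ (a, y))ᴴ := by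
  ext a a'
  simp [Pmat, Matrix.mul_apply]

lemma Qmat_eq (φ : α × β → ℂ) :
    Qmat φ = ((Matrix.of fun a y => φ (a, y))ᴴ * (Matrix.of fun a y => φ (a, y)))ᵀ := by
  ext y y'
  simp [Qmat, Matrix.mul_apply, mul_comm]

lemma Pmat_herm (φ : α × β → ℂ) : (Pmat φ).IsHermitian := by
  rw [Pmat_eq]
  exact Matrix.isHermitian_mul_conjTranspose_self _

lemma Qmat_herm (φ : α × β → ℂ) : (Qmat φ).IsHermitian := by
  rw [Qmat_eq]
  exact (Matrix.isHermitian_conjTranspose_mul_self _).transpose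

lemma my_pure_pair (φ : α × β → ℂ) :
    (Pmat φ).charpoly * X ^ (Fintype.card β) = (Qmat φ).charpoly * X ^ (Fintype.card α) := by
  rw [Pmat_eq, Qmat_eq, my_charpoly_transpose]
  exact my_charpoly_mul_comm_rect _ _

lemma my_entropy_Pmat_Qmat (φ : α × β → ℂ) : entropy (Pmat φ) = entropy (Qmat φ) :=
  my_entropy_pair (Pmat_herm φ) (Qmat_herm φ) (my_pure_pair φ)

lemma Pmat_trace (φ : α × β → ℂ) :
    (Pmat φ).trace = ((∑ x, Complex.normSq (φ x) : ℝ) : ℂ) := by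
  rw [Matrix.trace]
  push_cast
  rw [Fintype.sum_prod_type]
  refine Finset.sum_congr rfl fun a _ => Finset.sum_congr rfl fun y _ => ?_
  simp [Pmat, Matrix.diag, Complex.mul_conj]

lemma Qmat_trace (φ : α × β → ℂ) :
    (Qmat φ).trace = ((∑ x, Complex.normSq (φ x) : ℝ) : ℂ) := by
  rw [Matrix.trace]
  push_cast
  rw [Fintype.sum_prod_type, Finset.sum_comm]
  refine Finset.sum_congr rfl fun y _ => Finset.sum_congr rfl fun a _ => ?_
  simp [Qmat, Matrix.diag, Complex.mul_conj]

lemma my_sum_eig_one {A : Matrix n n ℂ} (hA : A.IsHermitian) (h : A.trace = 1) :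
    ∑ i, hA.eigenvalues i = 1 := by
  have := my_sum_eigenvalues hA
  rw [h] at this
  exact_mod_cast this
lemma my_entropy_eq_of_charpoly_eq {A : Matrix n n ℂ} {B : Matrix m m ℂ}
    (hA : A.IsHermitian) (hB : B.IsHermitian) (h : A.charpoly = B.charpoly) :
    entropy A = entropy B := by
  rw [my_charpoly_hermitian hB] at h
  rw [entropy, dif_pos hA, entropy, dif_pos hB]
  congr 1
  exact my_sum_eig hA _ h (fun x => x * Real.log x)

lemma my_charpoly_submatrix {e : m ≃ n} (M : Matrix n n ℂ) :
    (M.submatrix ⇑e ⇑e).charpoly = M.charpoly := by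
  rw [show M.submatrix ⇑e ⇑e = Matrix.reindex e.symm e.symm M from rfl,
    Matrix.charpoly_reindex]

end MyLemmas

/-- with `H_B = H_{B^L} ⊗ H_{B^R}`, `H_C = H_{C^L} ⊗ H_{C^R}`,
`H_Y = H_{B^L} ⊗ H_{C^L}` and `H_Z = H_{B^R} ⊗ H_{C^R}`, every state of the
form `ρ_ABC = |ψ_AY⟩⟨ψ_AY| ⊗ ρ_Z` (viewed on `H_A ⊗ H_B ⊗ H_C` via the factor
reordering) satisfies `T^(a)(ρ_ABC) = 0`. -/
theorem Ta_eq_zero_of_pure_tensor {A BL BR CL CR : Type*}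
    [Fintype A] [Fintype BL] [Fintype BR] [Fintype CL] [Fintype CR]
    [DecidableEq A] [DecidableEq BL] [DecidableEq BR] [DecidableEq CL] [DecidableEq CR]
    (ψ : A × (BL × CL) → ℂ) (hψ : UnitVec ψ)
    (ρZ : Matrix (BR × CR) (BR × CR) ℂ) (hZ : IsState ρZ) :
    Ta ((pureSt ψ ⊗ₖ ρZ).submatrix
        ⇑(reindexYZ A BL BR CL CR).symm ⇑(reindexYZ A BL BR CL CR).symm) = 0 := by
  set ρ := (pureSt ψ ⊗ₖ ρZ).submatrix
      ⇑(reindexYZ A BL BR CL CR).symm ⇑(reindexYZ A BL BR CL CR).symm with hρdef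
  set φ1 : (A × BL) × CL → ℂ := fun p => ψ (p.1.1, (p.1.2, p.2)) with hφ1
  set φ2 : (A × CL) × BL → ℂ := fun p => ψ (p.1.1, (p.2, p.1.2)) with hφ2
  set τB := ptraceRight ρZ with hτBdef
  set τC := ptraceLeft ρZ with hτCdef
  have hZH : ρZ.IsHermitian := hZ.1.1
  have hτBH : τB.IsHermitian := by
    ext br br'
    simp only [Matrix.conjTranspose_apply, hτBdef, ptraceRight, star_sum]
    exact Finset.sum_congr rfl fun cr _ => hZH.apply _ _
  have hτCH : τC.IsHermitian := by
    ext cr cr'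
    simp only [Matrix.conjTranspose_apply, hτCdef, ptraceLeft, star_sum]
    exact Finset.sum_congr rfl fun br _ => hZH.apply _ _
  have htrτB : τB.trace = 1 := by
    rw [← hZ.2]
    show (∑ br, ∑ cr, ρZ (br, cr) (br, cr)) = ∑ p : BR × CR, ρZ p p
    exact (Fintype.sum_prod_type (fun p : BR × CR => ρZ p p)).symm
  have htrτC : τC.trace = 1 := by
    rw [← hZ.2]
    show (∑ cr, ∑ br, ρZ (br, cr) (br, cr)) = ∑ p : BR × CR, ρZ p p
    rw [Finset.sum_comm]
    exact (Fintype.sum_prod_type (fun p : BR × CR => ρZ p p)).symm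
  have sB : ∑ i, hτBH.eigenvalues i = 1 := my_sum_eig_one hτBH htrτB
  have sC : ∑ i, hτCH.eigenvalues i = 1 := my_sum_eig_one hτCH htrτC
  have hsum1 : ((∑ x, Complex.normSq (φ1 x) : ℝ) : ℂ) = 1 := by
    rw [show (∑ x, Complex.normSq (φ1 x)) = ∑ x, Complex.normSq (ψ x) from
      Fintype.sum_equiv (Equiv.prodAssoc A BL CL) _ _ (fun p => rfl), hψ]
    norm_num
  have hsum2 : ((∑ x, Complex.normSq (φ2 x) : ℝ) : ℂ) = 1 := by
    rw [show (∑ x, Complex.normSq (φ2 x)) = ∑ x, Complex.normSq (ψ x) from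
      Fintype.sum_equiv ⟨fun p => (p.1.1, (p.2, p.1.2)), fun x => ((x.1, x.2.2), x.2.1),
        fun p => rfl, fun x => rfl⟩ _ _ (fun p => rfl), hψ]
    norm_num
  have sP1 : ∑ i, (Pmat_herm φ1).eigenvalues i = 1 :=
    my_sum_eig_one _ (by rw [Pmat_trace]; exact hsum1)
  have sQ1 : ∑ i, (Qmat_herm φ1).eigenvalues i = 1 :=
    my_sum_eig_one _ (by rw [Qmat_trace]; exact hsum1)
  have sP2 : ∑ i, (Pmat_herm φ2).eigenvalues i = 1 :=
    my_sum_eig_one _ (by rw [Pmat_trace]; exact hsum2)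
  have sQ2 : ∑ i, (Qmat_herm φ2).eigenvalues i = 1 :=
    my_sum_eig_one _ (by rw [Qmat_trace]; exact hsum2)
  have hAB : margAB ρ = (Pmat φ1 ⊗ₖ τB).submatrix
      (⇑(Equiv.prodAssoc A BL BR).symm) (⇑(Equiv.prodAssoc A BL BR).symm) := by
    ext x y
    show (∑ c : CL × CR, (ψ (x.1, (x.2.1, c.1)) * star (ψ (y.1, (y.2.1, c.1))))
        * ρZ (x.2.2, c.2) (y.2.2, c.2)) = _
    rw [Fintype.sum_prod_type]
    show _ = (∑ cl, ψ (x.1, (x.2.1, cl)) * star (ψ (y.1, (y.2.1, cl))))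
        * (∑ cr, ρZ (x.2.2, cr) (y.2.2, cr))
    rw [Finset.sum_mul_sum]
  have hAC : margAC ρ = (Pmat φ2 ⊗ₖ τC).submatrix
      (⇑(Equiv.prodAssoc A CL CR).symm) (⇑(Equiv.prodAssoc A CL CR).symm) := by
    ext x y
    show (∑ b : BL × BR, (ψ (x.1, (b.1, x.2.1)) * star (ψ (y.1, (b.1, y.2.1))))
        * ρZ (b.2, x.2.2) (b.2, y.2.2)) = _
    rw [Fintype.sum_prod_type]
    show _ = (∑ bl, ψ (x.1, (bl, x.2.1)) * star (ψ (y.1, (bl, y.2.1))))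
        * (∑ br, ρZ (br, x.2.2) (br, y.2.2))
    rw [Finset.sum_mul_sum]
  have hB : margB ρ = Qmat φ2 ⊗ₖ τB := by
    ext x y
    show (∑ a, ∑ c : CL × CR, (ψ (a, (x.1, c.1)) * star (ψ (a, (y.1, c.1))))
          * ρZ (x.2, c.2) (y.2, c.2))
        = (∑ p : A × CL, ψ (p.1, (x.1, p.2)) * star (ψ (p.1, (y.1, p.2))))
          * (∑ cr, ρZ (x.2, cr) (y.2, cr))
    rw [Finset.sum_mul_sum, Fintype.sum_prod_type]
    exact Finset.sum_congr rfl fun a _ => Fintype.sum_prod_type _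
  have hC : margC ρ = Qmat φ1 ⊗ₖ τC := by
    ext x y
    show (∑ a, ∑ b : BL × BR, (ψ (a, (b.1, x.1)) * star (ψ (a, (b.1, y.1))))
          * ρZ (b.2, x.2) (b.2, y.2))
        = (∑ p : A × BL, ψ (p.1, (p.2, x.1)) * star (ψ (p.1, (p.2, y.1))))
          * (∑ br, ρZ (br, x.2) (br, y.2))
    rw [Finset.sum_mul_sum, Fintype.sum_prod_type]
    exact Finset.sum_congr rfl fun a _ => Fintype.sum_prod_type _
  have hkAB := my_kron_herm (Pmat_herm φ1) hτBH
  have hkAC := my_kron_herm (Pmat_herm φ2) hτCH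
  have eAB : entropy (margAB ρ) = entropy (Pmat φ1) + entropy τB := by
    rw [hAB, my_entropy_eq_of_charpoly_eq
      ((Matrix.isHermitian_submatrix_equiv (Equiv.prodAssoc A BL BR).symm).2 hkAB) hkAB
      (my_charpoly_submatrix _),
      my_entropy_kronecker (Pmat_herm φ1) hτBH, sB, sP1, one_mul, one_mul]
  have eAC : entropy (margAC ρ) = entropy (Pmat φ2) + entropy τC := by
    rw [hAC, my_entropy_eq_of_charpoly_eq
      ((Matrix.isHermitian_submatrix_equiv (Equiv.prodAssoc A CL CR).symm).2 hkAC) hkAC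
      (my_charpoly_submatrix _),
      my_entropy_kronecker (Pmat_herm φ2) hτCH, sC, sP2, one_mul, one_mul]
  have eB : entropy (margB ρ) = entropy (Qmat φ2) + entropy τB := by
    rw [hB, my_entropy_kronecker (Qmat_herm φ2) hτBH, sB, sQ2, one_mul, one_mul]
  have eC : entropy (margC ρ) = entropy (Qmat φ1) + entropy τC := by
    rw [hC, my_entropy_kronecker (Qmat_herm φ1) hτCH, sC, sQ1, one_mul, one_mul]
  have p1 := my_entropy_Pmat_Qmat φ1
  have p2 := my_entropy_Pmat_Qmat φ2
  unfold Ta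
  rw [eAB, eAC, eB, eC]
  linarith

end
end

section
/- (Koashi–Winter inequality) For every state ρ_ABC on H_A ⊗ H_B ⊗ H_C, E(ρ_AB) ≤ D^(C)(ρ_AC) + S_{ρ_AC}(A|C). -/
open Matrix Kronecker
open scoped Classical ComplexOrder

noncomputable section

section Aux
open Real

variable {n : Type*} [Fintype n] [DecidableEq n]

lemma entropy_eq {ρ : Matrix n n ℂ} (h : ρ.IsHermitian) :
    entropy ρ = ∑ i, Real.negMulLog (h.eigenvalues i) := by
  rw [entropy, dif_pos h]
  simp [Real.negMulLog, neg_mul, Finset.sum_neg_distrib]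

lemma trace_eq_sum_eigenvalues {ρ : Matrix n n ℂ} (h : ρ.IsHermitian) :
    ρ.trace = ∑ i, (h.eigenvalues i : ℂ) := by
  conv_lhs => rw [h.spectral_theorem, Unitary.conjStarAlgAut_apply]
  rw [Matrix.trace_mul_cycle,
    show (star h.eigenvectorUnitary : Matrix n n ℂ) * h.eigenvectorUnitary = 1 from
      (Matrix.mem_unitaryGroup_iff').mp (h.eigenvectorUnitary).2,
    Matrix.one_mul, Matrix.trace_diagonal]
  rfl

lemma entropy_nonneg {ρ : Matrix n n ℂ} (h : ρ.PosSemidef) (htr : ρ.trace.re ≤ 1) :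
    0 ≤ entropy ρ := by
  rw [entropy_eq h.1]
  refine Finset.sum_nonneg fun i _ => Real.negMulLog_nonneg (h.eigenvalues_nonneg i) ?_
  have hsum : ∑ j, h.1.eigenvalues j = ρ.trace.re := by
    rw [trace_eq_sum_eigenvalues h.1]
    push_cast
    simp
  calc h.1.eigenvalues i ≤ ∑ j, h.1.eigenvalues j :=
        Finset.single_le_sum (f := fun j => h.1.eigenvalues j)
          (fun j _ => h.eigenvalues_nonneg j) (Finset.mem_univ i)
    _ ≤ 1 := hsum ▸ htr

end Aux

section Aux2
variable {n : Type*} [Fintype n] [DecidableEq n]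

def eigCol {ρ : Matrix n n ℂ} (h : ρ.IsHermitian) (k : n) : n → ℂ :=
  fun x => (h.eigenvectorUnitary : Matrix n n ℂ) x k

def ONB (v : n → n → ℂ) : Prop :=
  ∀ i j, star (v i) ⬝ᵥ v j = if i = j then 1 else 0

lemma onb_eigCol {ρ : Matrix n n ℂ} (h : ρ.IsHermitian) : ONB (eigCol h) := by
  intro i j
  have h1 : (star h.eigenvectorUnitary : Matrix n n ℂ) * h.eigenvectorUnitary = 1 :=
    (Matrix.mem_unitaryGroup_iff').mp (h.eigenvectorUnitary).2
  have := congrFun (congrFun h1 i) j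
  simpa [Matrix.mul_apply, Matrix.one_apply, dotProduct, eigCol, Matrix.star_apply,
    Matrix.conjTranspose_apply] using this

lemma ONB.sum_pureSt {v : n → n → ℂ} (hv : ONB v) : ∑ i, pureSt (v i) = 1 := by
  classical
  set V : Matrix n n ℂ := Matrix.of (fun c i => v i c) with hV
  have h2 : Vᴴ * V = 1 := by
    ext i j
    have := hv i j
    simp only [dotProduct, Pi.star_apply] at this
    simpa [Matrix.mul_apply, Matrix.conjTranspose_apply, hV, Matrix.one_apply] using this
  have h1 : V * Vᴴ = 1 := mul_eq_one_comm.mp h2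
  ext d d'
  have := congrFun (congrFun h1 d) d'
  simpa [Matrix.mul_apply, Matrix.conjTranspose_apply, hV, Matrix.one_apply, pureSt,
    Matrix.sum_apply, Matrix.vecMulVec_apply, Complex.star_def] using this

lemma ONB.unit {v : n → n → ℂ} (hv : ONB v) (i : n) : UnitVec (v i) := by
  have := hv i i
  simp only [if_pos rfl, dotProduct, Pi.star_apply] at this
  have h2 : (∑ c, star (v i c) * v i c).re = 1 := by rw [this]; rfl
  simp only [Complex.re_sum] at h2
  rw [UnitVec]
  rw [← h2]
  refine Finset.sum_congr rfl fun c _ => ?_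
  rw [Complex.star_def, mul_comm, Complex.mul_conj]
  simp

lemma spectral_decomp {ρ : Matrix n n ℂ} (h : ρ.IsHermitian) :
    ρ = ∑ k, h.eigenvalues k • pureSt (eigCol h k) := by
  ext x y
  conv_lhs => rw [h.spectral_theorem, Unitary.conjStarAlgAut_apply]
  simp only [Matrix.mul_apply, Matrix.diagonal_apply, Function.comp_apply, Matrix.star_apply,
    Matrix.conjTranspose_apply, Matrix.sum_apply, Matrix.smul_apply, pureSt,
    Matrix.vecMulVec_apply, Pi.star_apply, eigCol, mul_ite, mul_zero, ite_mul, zero_mul,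
    Finset.sum_ite_eq, Finset.sum_ite_eq', Finset.mem_univ, if_pos, Complex.real_smul]
  refine Finset.sum_congr rfl fun k _ => ?_
  rw [mul_right_comm, mul_comm]
  norm_cast

end Aux2

section Aux3
set_option linter.unusedSectionVars false
variable {n : Type*} [Fintype n] [DecidableEq n]

lemma conj_dot (x y : n → ℂ) : star x ⬝ᵥ y = starRingEnd ℂ (star y ⬝ᵥ x) := by
  simp only [dotProduct, Pi.star_apply, map_sum, Complex.star_def]
  exact Finset.sum_congr rfl fun c _ => by
    rw [map_mul (starRingEnd ℂ), Complex.conj_conj]; ring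

lemma pureSt_mulVec (ψ x : n → ℂ) : pureSt ψ *ᵥ x = (star ψ ⬝ᵥ x) • ψ := by
  ext a
  simp only [pureSt, Matrix.mulVec, dotProduct, Matrix.vecMulVec_apply, Pi.star_apply,
    Pi.smul_apply, smul_eq_mul, Finset.sum_mul, Finset.mul_sum]
  exact Finset.sum_congr rfl fun c _ => by ring

lemma pureSt_posSemidef (ψ : n → ℂ) : (pureSt ψ).PosSemidef := by
  refine Matrix.PosSemidef.of_dotProduct_mulVec_nonneg ?_ ?_
  · ext x y
    simp [pureSt, Matrix.conjTranspose_apply, Matrix.vecMulVec_apply, mul_comm]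
  · intro x
    rw [pureSt_mulVec, dotProduct_smul]
    rw [conj_dot]
    rw [smul_eq_mul, mul_comm, Complex.mul_conj]
    exact_mod_cast Complex.normSq_nonneg _

lemma pureSt_trace {ψ : n → ℂ} (hψ : UnitVec ψ) : (pureSt ψ).trace = 1 := by
  have : (pureSt ψ).trace = ((∑ x, Complex.normSq (ψ x) : ℝ) : ℂ) := by
    push_cast
    simp only [Matrix.trace, Matrix.diag, pureSt, Matrix.vecMulVec_apply, Pi.star_apply]
    exact Finset.sum_congr rfl fun x _ => by
      rw [Complex.star_def, Complex.mul_conj]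
  rw [this, hψ]
  norm_num

lemma psd_zero : (0 : Matrix n n ℂ).PosSemidef :=
  ⟨Matrix.isHermitian_zero, fun x => by simp⟩

lemma psd_sum {ι : Type*} [Fintype ι] {f : ι → Matrix n n ℂ} (h : ∀ i, (f i).PosSemidef) :
    (∑ i, f i).PosSemidef := by
  classical
  exact Finset.sum_induction f _ (fun a b ha hb => ha.add hb) psd_zero (fun i _ => h i)

lemma psd_smul {M : Matrix n n ℂ} (h : M.PosSemidef) {r : ℝ} (hr : 0 ≤ r) :
    (r • M).PosSemidef := by
  refine Matrix.PosSemidef.of_dotProduct_mulVec_nonneg ?_ ?_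
  · ext x y
    have e : Mᴴ x y = M x y := congrFun (congrFun h.1 x) y
    simp only [Matrix.conjTranspose_apply, Matrix.smul_apply] at e ⊢
    rw [star_smul, star_trivial, e]
  · intro x
    rw [Matrix.smul_mulVec, dotProduct_smul]
    have h2 := h.dotProduct_mulVec_nonneg x
    rw [Complex.real_smul]
    exact mul_nonneg (by exact_mod_cast hr) h2

lemma jensen_negMulLog {ι : Type*} [Fintype ι] (w x : ι → ℝ) (h0 : ∀ i, 0 ≤ w i)
    (h1 : ∑ i, w i = 1) (hx : ∀ i, 0 ≤ x i) :
    ∑ i, w i * Real.negMulLog (x i) ≤ Real.negMulLog (∑ i, w i * x i) := by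
  simpa [smul_eq_mul] using
    Real.concaveOn_negMulLog.le_map_sum (fun i _ => h0 i) h1 (fun i _ => hx i)

end Aux3

section Aux4
set_option linter.unusedSectionVars false

variable {n : Type*} [Fintype n] [DecidableEq n]

lemma re_rsmul (r : ℝ) (z : ℂ) : (r • z).re = r * z.re := by
  rw [Complex.real_smul, Complex.mul_re]
  simp

lemma dot_smulM (r : ℝ) (M : Matrix n n ℂ) (x y : n → ℂ) :
    star x ⬝ᵥ (r • M) *ᵥ y = r • (star x ⬝ᵥ M *ᵥ y) := by
  rw [Matrix.smul_mulVec, dotProduct_smul]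

lemma mulVec_sumM {ι : Type*} [Fintype ι] (M : ι → Matrix n n ℂ) (y : n → ℂ) :
    (∑ j, M j) *ᵥ y = ∑ j, M j *ᵥ y := by
  ext a
  simp only [Matrix.mulVec, dotProduct, Matrix.sum_apply, Finset.sum_apply,
    Finset.sum_mul]
  exact Finset.sum_comm

lemma dotProduct_sum' {ι : Type*} [Fintype ι] (x : n → ℂ) (f : ι → n → ℂ) :
    x ⬝ᵥ (∑ j, f j) = ∑ j, x ⬝ᵥ f j := by
  simp only [dotProduct, Finset.sum_apply, Finset.mul_sum]
  exact Finset.sum_comm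

lemma dot_sumM {ι : Type*} [Fintype ι] (M : ι → Matrix n n ℂ) (x y : n → ℂ) :
    star x ⬝ᵥ (∑ j, M j) *ᵥ y = ∑ j, star x ⬝ᵥ (M j) *ᵥ y := by
  rw [mulVec_sumM, dotProduct_sum']

lemma dot_pureSt (g x y : n → ℂ) :
    star x ⬝ᵥ pureSt g *ᵥ y = (star x ⬝ᵥ g) * (star g ⬝ᵥ y) := by
  rw [pureSt_mulVec, dotProduct_smul, smul_eq_mul]
  ring

lemma dot_eigen {ρ : Matrix n n ℂ} (h : ρ.IsHermitian) (m : n) :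
    star (eigCol h m) ⬝ᵥ ρ *ᵥ eigCol h m = (h.eigenvalues m : ℂ) := by
  have hcol : eigCol h m = ⇑(h.eigenvectorBasis m) := rfl
  rw [hcol, h.mulVec_eigenvectorBasis, dotProduct_smul, ← hcol, onb_eigCol h m m, if_pos rfl,
    Complex.real_smul, mul_one]

lemma entropy_le_basis {ρ : Matrix n n ℂ} (hρ : ρ.PosSemidef) {v : n → n → ℂ} (hv : ONB v) :
    entropy ρ ≤ ∑ m, Real.negMulLog ((star (v m) ⬝ᵥ ρ *ᵥ v m).re) := by
  classical
  have h : ρ.IsHermitian := hρ.1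
  set g : n → n → ℂ := eigCol h with hg
  set μ : n → ℝ := h.eigenvalues with hμ
  set B : n → n → ℝ := fun m j => Complex.normSq (star (v m) ⬝ᵥ g j) with hB
  have hB0 : ∀ m j, 0 ≤ B m j := fun m j => Complex.normSq_nonneg _
  have key : ∀ x y : n → ℂ, star x ⬝ᵥ ρ *ᵥ y
      = ∑ j, (μ j : ℂ) * ((star x ⬝ᵥ g j) * (star (g j) ⬝ᵥ y)) := by
    intro x y
    conv_lhs => rw [spectral_decomp h]
    rw [dot_sumM]
    exact Finset.sum_congr rfl fun j _ => by
      rw [dot_smulM, dot_pureSt, Complex.real_smul]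
  have hval : ∀ m, (star (v m) ⬝ᵥ ρ *ᵥ v m).re = ∑ j, B m j * μ j := by
    intro m
    rw [key]
    have : ∀ j, (μ j : ℂ) * ((star (v m) ⬝ᵥ g j) * (star (g j) ⬝ᵥ v m))
        = ((B m j * μ j : ℝ) : ℂ) := by
      intro j
      rw [conj_dot (g j) (v m), Complex.mul_conj]
      push_cast
      ring
    rw [Finset.sum_congr rfl fun j _ => this j]
    rw [← Complex.ofReal_sum]
    simp
  have hrow : ∀ m, ∑ j, B m j = 1 := by
    intro m
    have hc : star (v m) ⬝ᵥ (∑ j, pureSt (g j)) *ᵥ v m = 1 := by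
      rw [(onb_eigCol h).sum_pureSt, Matrix.one_mulVec, hv m m, if_pos rfl]
    rw [dot_sumM] at hc
    have : ∀ j, star (v m) ⬝ᵥ pureSt (g j) *ᵥ v m = ((B m j : ℝ) : ℂ) := by
      intro j
      rw [dot_pureSt, conj_dot (g j) (v m), Complex.mul_conj]
    rw [Finset.sum_congr rfl fun j _ => this j, ← Complex.ofReal_sum] at hc
    exact_mod_cast hc
  have hcol : ∀ j, ∑ m, B m j = 1 := by
    intro j
    have hc : star (g j) ⬝ᵥ (∑ m, pureSt (v m)) *ᵥ g j = 1 := by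
      rw [hv.sum_pureSt, Matrix.one_mulVec, onb_eigCol h j j, if_pos rfl]
    rw [dot_sumM] at hc
    have : ∀ m, star (g j) ⬝ᵥ pureSt (v m) *ᵥ g j = ((B m j : ℝ) : ℂ) := by
      intro m
      rw [dot_pureSt, conj_dot (g j) (v m), mul_comm, Complex.mul_conj]
    rw [Finset.sum_congr rfl fun m _ => this m, ← Complex.ofReal_sum] at hc
    exact_mod_cast hc
  have hμ0 : ∀ j, 0 ≤ μ j := fun j => hρ.eigenvalues_nonneg j
  calc entropy ρ = ∑ j, Real.negMulLog (μ j) := entropy_eq h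
    _ = ∑ j, (∑ m, B m j) * Real.negMulLog (μ j) := by
        refine Finset.sum_congr rfl fun j _ => by rw [hcol j, one_mul]
    _ = ∑ m, ∑ j, B m j * Real.negMulLog (μ j) := by
        rw [Finset.sum_comm]
        exact Finset.sum_congr rfl fun j _ => by rw [Finset.sum_mul]
    _ ≤ ∑ m, Real.negMulLog ((star (v m) ⬝ᵥ ρ *ᵥ v m).re) := by
        refine Finset.sum_le_sum fun m _ => ?_
        rw [hval m]
        exact jensen_negMulLog (B m) μ (hB0 m) (hrow m) hμ0

lemma entropy_concave {ι : Type*} [Fintype ι] (w : ι → ℝ) (σ : ι → Matrix n n ℂ)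
    (hw : ∀ i, 0 ≤ w i) (hσ : ∀ i, (σ i).PosSemidef) :
    ∑ i, w i * entropy (σ i)
      ≤ (∑ i, w i) * entropy ((∑ i, w i)⁻¹ • ∑ i, w i • σ i) := by
  classical
  set t := ∑ i, w i with ht
  rcases (Finset.sum_nonneg fun i _ => hw i : (0:ℝ) ≤ t).eq_or_lt with h0 | hpos
  · have hall : ∀ i ∈ Finset.univ, w i = 0 :=
      (Finset.sum_eq_zero_iff_of_nonneg fun i _ => hw i).mp h0.symm
    have hLHS : ∑ i, w i * entropy (σ i) = 0 :=
      Finset.sum_eq_zero fun i hi => by rw [hall i hi, zero_mul]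
    rw [hLHS, ht, ← h0, zero_mul]
  · set ρ : Matrix n n ℂ := t⁻¹ • ∑ i, w i • σ i with hρdef
    have hρ : ρ.PosSemidef :=
      psd_smul (psd_sum fun i => psd_smul (hσ i) (hw i)) (inv_nonneg.mpr hpos.le)
    have h := hρ.1
    set v : n → n → ℂ := eigCol h with hvdef
    have hv : ONB v := onb_eigCol h
    set e : ι → n → ℝ := fun i m => (star (v m) ⬝ᵥ (σ i) *ᵥ v m).re with he
    have he0 : ∀ i m, 0 ≤ e i m := fun i m => (hσ i).re_dotProduct_nonneg _
    have hlam : ∀ m, h.eigenvalues m = ∑ i, (w i / t) * e i m := by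
      intro m
      have h1 : star (v m) ⬝ᵥ ρ *ᵥ v m = (h.eigenvalues m : ℂ) := dot_eigen h m
      have h2 : star (v m) ⬝ᵥ ρ *ᵥ v m
          = t⁻¹ • ∑ i, w i • (star (v m) ⬝ᵥ (σ i) *ᵥ v m) := by
        rw [hρdef, dot_smulM, dot_sumM]
        congr 1
        exact Finset.sum_congr rfl fun i _ => dot_smulM (w i) (σ i) _ _
      have h3 := h1.symm.trans h2
      have hre := congrArg Complex.re h3
      rw [re_rsmul, Complex.re_sum, Complex.ofReal_re] at hre
      simp only [re_rsmul] at hre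
      rw [hre, Finset.mul_sum]
      exact Finset.sum_congr rfl fun i _ => by
        rw [div_eq_mul_inv]; ring
    have hwsum : ∑ i, w i / t = 1 := by
      rw [← Finset.sum_div, ← ht, div_self hpos.ne']
    have step1 : ∑ i, (w i / t) * (∑ m, Real.negMulLog (e i m)) ≤ entropy ρ := by
      rw [entropy_eq h]
      have : ∀ m, ∑ i, (w i / t) * Real.negMulLog (e i m)
          ≤ Real.negMulLog (h.eigenvalues m) := by
        intro m
        rw [hlam m]
        exact jensen_negMulLog _ _ (fun i => div_nonneg (hw i) hpos.le) hwsum (fun i => he0 i m)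
      calc ∑ i, (w i / t) * (∑ m, Real.negMulLog (e i m))
          = ∑ m, ∑ i, (w i / t) * Real.negMulLog (e i m) := by
            rw [Finset.sum_comm]
            exact Finset.sum_congr rfl fun i _ => by rw [Finset.mul_sum]
        _ ≤ ∑ m, Real.negMulLog (h.eigenvalues m) := Finset.sum_le_sum fun m _ => this m
    have step2 : ∀ i, entropy (σ i) ≤ ∑ m, Real.negMulLog (e i m) :=
      fun i => entropy_le_basis (hσ i) hv
    have : ∑ i, (w i / t) * entropy (σ i) ≤ entropy ρ :=
      le_trans (Finset.sum_le_sum fun i _ =>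
        mul_le_mul_of_nonneg_left (step2 i) (div_nonneg (hw i) hpos.le)) step1
    calc ∑ i, w i * entropy (σ i) = t * ∑ i, (w i / t) * entropy (σ i) := by
          rw [Finset.mul_sum]
          exact Finset.sum_congr rfl fun i _ => by rw [← mul_assoc, mul_div_cancel₀ _ hpos.ne']
      _ ≤ t * entropy ρ := mul_le_mul_of_nonneg_left this hpos.le

end Aux4

section Aux5
set_option linter.unusedSectionVars false
variable {X Y : Type*} [Fintype X] [Fintype Y] [DecidableEq X] [DecidableEq Y]

def embY (b : Y) : Matrix (X × Y) X ℂ := fun q x' => if q = (x', b) then 1 else 0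

lemma ptraceRight_eq (M : Matrix (X × Y) (X × Y) ℂ) :
    ptraceRight M = ∑ b : Y, (embY (X := X) b)ᴴ * M * embY (X := X) b := by
  ext x x'
  simp only [ptraceRight, Matrix.sum_apply, Matrix.mul_apply, Matrix.conjTranspose_apply,
    embY, apply_ite (star : ℂ → ℂ), star_one, star_zero, ite_mul, one_mul, zero_mul,
    mul_ite, mul_one, mul_zero, Finset.sum_ite_eq, Finset.sum_ite_eq', Finset.mem_univ,
    if_pos]

lemma ptraceRight_posSemidef {M : Matrix (X × Y) (X × Y) ℂ} (h : M.PosSemidef) :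
    (ptraceRight M).PosSemidef := by
  rw [ptraceRight_eq]
  exact psd_sum fun b => h.conjTranspose_mul_mul_same _

lemma ptraceRight_trace (M : Matrix (X × Y) (X × Y) ℂ) :
    (ptraceRight M).trace = M.trace := by
  simp [Matrix.trace, Matrix.diag, ptraceRight, Fintype.sum_prod_type]

lemma ptraceRight_smul (r : ℝ) (M : Matrix (X × Y) (X × Y) ℂ) :
    ptraceRight (r • M) = r • ptraceRight M := by
  ext x x'
  simp [ptraceRight, Finset.smul_sum]

lemma ptraceRight_sum {ι : Type*} [Fintype ι] (f : ι → Matrix (X × Y) (X × Y) ℂ) :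
    ptraceRight (∑ i, f i) = ∑ i, ptraceRight (f i) := by
  ext x x'
  simp only [ptraceRight, Matrix.sum_apply]
  exact Finset.sum_comm

end Aux5

section Aux6
set_option linter.unusedSectionVars false
set_option maxHeartbeats 1000000

lemma ONB.complete {n : Type*} [Fintype n] [DecidableEq n] {v : n → n → ℂ} (hv : ONB v)
    (d d' : n) :
    ∑ i, (starRingEnd ℂ) (v i d) * v i d' = if d = d' then 1 else 0 := by
  have h := congrFun (congrFun hv.sum_pureSt d') d
  simp only [Matrix.sum_apply, pureSt, Matrix.vecMulVec_apply, Pi.star_apply,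
    Complex.star_def, Matrix.one_apply] at h
  rw [show ∑ i, (starRingEnd ℂ) (v i d) * v i d' = ∑ i, v i d' * (starRingEnd ℂ) (v i d) from
    Finset.sum_congr rfl fun i _ => mul_comm _ _, h]
  simp [eq_comm]

lemma ONB.unit_sum {n : Type*} [Fintype n] [DecidableEq n] {v : n → n → ℂ} (hv : ONB v)
    (i : n) : ∑ c, (starRingEnd ℂ) (v i c) * v i c = 1 := by
  have := hv i i
  simp only [dotProduct, Pi.star_apply, Complex.star_def, if_pos rfl] at this
  exact this

variable {A B C : Type*} [Fintype A] [Fintype B] [Fintype C]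
  [DecidableEq A] [DecidableEq B] [DecidableEq C]

def measX (v : C → C → ℂ) (i : C) : Matrix (A × B × C) (A × B) ℂ :=
  fun q y => if q.1 = y.1 then if q.2.1 = y.2 then v i q.2.2 else 0 else 0

def tau (ρ : Matrix (A × B × C) (A × B × C) ℂ) (v : C → C → ℂ) (i : C) :
    Matrix (A × B) (A × B) ℂ :=
  (measX (A := A) (B := B) v i)ᴴ * ρ * measX (A := A) (B := B) v i

def theta (σ : Matrix (A × C) (A × C) ℂ) (v : C → C → ℂ) (i : C) : Matrix A A ℂ :=
  fun a a' => ∑ d, ∑ d', (starRingEnd ℂ) (v i d) * σ (a, d) (a', d') * v i d'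

lemma tau_posSemidef {ρ : Matrix (A × B × C) (A × B × C) ℂ} (hρ : ρ.PosSemidef)
    (v : C → C → ℂ) (i : C) : (tau ρ v i).PosSemidef :=
  hρ.conjTranspose_mul_mul_same _

lemma tau_apply (ρ : Matrix (A × B × C) (A × B × C) ℂ) (v : C → C → ℂ) (i : C)
    (x y : A × B) :
    tau ρ v i x y
      = ∑ d, ∑ d', (starRingEnd ℂ) (v i d) * ρ (x.1, x.2, d) (y.1, y.2, d') * v i d' := by
  simp only [tau, measX, Matrix.mul_apply, Matrix.conjTranspose_apply, Fintype.sum_prod_type,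
    apply_ite (star : ℂ → ℂ), star_zero, ite_mul, zero_mul, mul_ite, mul_zero,
    Finset.sum_ite_eq, Finset.sum_ite_eq', Finset.mem_univ, if_pos, Complex.star_def,
    Finset.sum_mul, Finset.mul_sum, Finset.sum_ite_irrel, Finset.sum_const_zero]
  exact Finset.sum_comm

lemma sum_tau {ρ : Matrix (A × B × C) (A × B × C) ℂ} {v : C → C → ℂ} (hv : ONB v) :
    ∑ i, tau ρ v i = margAB ρ := by
  ext x y
  rw [Matrix.sum_apply]
  have h1 : ∑ i, tau ρ v i x y
      = ∑ d, ∑ d', (∑ i, (starRingEnd ℂ) (v i d) * v i d') * ρ (x.1, x.2, d) (y.1, y.2, d') := by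
    rw [Finset.sum_congr rfl fun i _ => tau_apply ρ v i x y, Finset.sum_comm]
    refine Finset.sum_congr rfl fun d _ => ?_
    rw [Finset.sum_comm]
    refine Finset.sum_congr rfl fun d' _ => ?_
    rw [Finset.sum_mul]
    exact Finset.sum_congr rfl fun j _ => by ring
  rw [h1]
  simp only [hv.complete, ite_mul, one_mul, zero_mul, Finset.sum_ite_eq, Finset.mem_univ,
    if_pos]
  rfl

lemma ptraceRight_tau (ρ : Matrix (A × B × C) (A × B × C) ℂ) (v : C → C → ℂ) (i : C) :
    ptraceRight (tau ρ v i) = theta (margAC ρ) v i := by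
  ext a a'
  show ∑ b, tau ρ v i (a, b) (a', b) = _
  rw [Finset.sum_congr rfl fun b _ => tau_apply ρ v i (a, b) (a', b), Finset.sum_comm]
  refine Finset.sum_congr rfl fun d _ => ?_
  rw [Finset.sum_comm]
  refine Finset.sum_congr rfl fun d' _ => ?_
  show _ = (starRingEnd ℂ) (v i d) * (∑ b, ρ (a, b, d) (a', b, d')) * v i d'
  rw [Finset.mul_sum, Finset.sum_mul]

lemma theta_eq_ptrace {X : Type*} [Fintype X] [DecidableEq X]
    (σ : Matrix (X × C) (X × C) ℂ) {v : C → C → ℂ} (hv : ONB v) (i : C) :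
    ptraceRight (((1 : Matrix X X ℂ) ⊗ₖ pureSt (v i)) * σ * ((1 : Matrix X X ℂ) ⊗ₖ pureSt (v i)))
      = theta σ v i := by
  ext a a'
  show _ = theta σ v i a a'
  simp only [ptraceRight, theta, Matrix.mul_apply, Matrix.kroneckerMap_apply, Matrix.one_apply,
    pureSt, Matrix.vecMulVec_apply, Pi.star_apply, Complex.star_def, Fintype.sum_prod_type,
    ite_mul, zero_mul, one_mul, mul_ite, mul_zero, mul_one, Finset.sum_ite_irrel,
    Finset.sum_const_zero, Finset.sum_ite_eq, Finset.sum_ite_eq', Finset.mem_univ, if_pos,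
    Finset.sum_mul, Finset.mul_sum]
  have step : ∀ x1 : C, (∑ x : C, ∑ x2 : C, v i x * (starRingEnd ℂ) (v i x2) *
        σ (a, x2) (a', x1) * (v i x1 * (starRingEnd ℂ) (v i x)))
      = ∑ x2 : C, (starRingEnd ℂ) (v i x2) * σ (a, x2) (a', x1) * v i x1 := by
    intro x1
    rw [Finset.sum_comm]
    refine Finset.sum_congr rfl fun x2 _ => ?_
    rw [show (∑ x : C, v i x * (starRingEnd ℂ) (v i x2) * σ (a, x2) (a', x1) *
          (v i x1 * (starRingEnd ℂ) (v i x)))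
        = (∑ x : C, (starRingEnd ℂ) (v i x) * v i x) *
            ((starRingEnd ℂ) (v i x2) * σ (a, x2) (a', x1) * v i x1) from by
      rw [Finset.sum_mul]
      exact Finset.sum_congr rfl fun x _ => by ring]
    rw [hv.unit_sum i, one_mul]
  rw [Finset.sum_comm]
  rw [Finset.sum_congr rfl fun x1 _ => step x1]
  exact Finset.sum_comm

lemma measProb_eq {X : Type*} [Fintype X] [DecidableEq X]
    (σ : Matrix (X × C) (X × C) ℂ) {v : C → C → ℂ} (hv : ONB v) (i : C) :
    measProb σ (v i) = (theta σ v i).trace.re := by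
  have : ((((1 : Matrix X X ℂ) ⊗ₖ pureSt (v i)) * σ).trace) = (theta σ v i).trace := by
    simp only [Matrix.trace, Matrix.diag, theta, Matrix.mul_apply, Matrix.kroneckerMap_apply,
      Matrix.one_apply, pureSt, Matrix.vecMulVec_apply, Pi.star_apply, Complex.star_def,
      Fintype.sum_prod_type, ite_mul, zero_mul, one_mul, mul_ite, mul_zero, mul_one,
      Finset.sum_ite_irrel, Finset.sum_const_zero, Finset.sum_ite_eq, Finset.sum_ite_eq',
      Finset.mem_univ, if_pos, Finset.sum_mul, Finset.mul_sum]
    refine Finset.sum_congr rfl fun x0 _ => ?_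
    rw [Finset.sum_comm]
    refine Finset.sum_congr rfl fun d _ => ?_
    refine Finset.sum_congr rfl fun d' _ => by ring
  rw [measProb, this]

end Aux6

section Key
set_option linter.unusedSectionVars false
set_option maxHeartbeats 1000000

lemma eof_le_measured {A B C : Type*} [Fintype A] [Fintype B] [Fintype C]
    [DecidableEq A] [DecidableEq B] [DecidableEq C]
    {ρ : Matrix (A × B × C) (A × B × C) ℂ} (hρ : ρ.PosSemidef)
    {v : C → C → ℂ} (hv : ONB v) :
    eof (margAB ρ)
      ≤ ∑ i, measProb (margAC ρ) (v i) * entropy (postState (margAC ρ) (v i)) := by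
  classical
  set σ := margAC ρ with hσdef
  have hτ : ∀ i, (tau ρ v i).PosSemidef := fun i => tau_posSemidef hρ v i
  set lam : C → (A × B) → ℝ := fun i k => (hτ i).1.eigenvalues k with hlamdef
  set ψ : C → (A × B) → (A × B) → ℂ := fun i k => eigCol (hτ i).1 k with hψdef
  have hlam0 : ∀ i k, 0 ≤ lam i k := fun i k => (hτ i).eigenvalues_nonneg k
  have hψu : ∀ i k, UnitVec (ψ i k) := fun i k => (onb_eigCol (hτ i).1).unit k
  have hspec : ∀ i, tau ρ v i = ∑ k, lam i k • pureSt (ψ i k) :=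
    fun i => spectral_decomp (hτ i).1
  have hmeas : ∀ i, measProb σ (v i) = ∑ k, lam i k := by
    intro i
    rw [hσdef, measProb_eq (margAC ρ) hv i, ← ptraceRight_tau ρ v i, ptraceRight_trace,
      trace_eq_sum_eigenvalues (hτ i).1, ← Complex.ofReal_sum]
    simp [hlamdef]
  have hpost : ∀ i, postState σ (v i) = (measProb σ (v i))⁻¹ • theta σ v i := by
    intro i
    rw [postState, theta_eq_ptrace σ hv i]
  have hper : ∀ i, ∑ k, lam i k * entropy (ptraceRight (pureSt (ψ i k)))
      ≤ measProb σ (v i) * entropy (postState σ (v i)) := by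
    intro i
    have hc := entropy_concave (lam i) (fun k => ptraceRight (pureSt (ψ i k)))
      (hlam0 i) (fun k => ptraceRight_posSemidef (pureSt_posSemidef _))
    have hsum : (∑ k, lam i k • ptraceRight (pureSt (ψ i k))) = theta σ v i := by
      rw [show (∑ k, lam i k • ptraceRight (pureSt (ψ i k)))
          = ∑ k, ptraceRight (lam i k • pureSt (ψ i k)) from
        Finset.sum_congr rfl fun k _ => (ptraceRight_smul _ _).symm,
        ← ptraceRight_sum, ← hspec i, ptraceRight_tau ρ v i, ← hσdef]
    rw [hsum, ← hmeas i] at hc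
    rw [hpost i]
    exact hc
  set eqv : Fin (Fintype.card (C × (A × B))) ≃ C × (A × B) :=
    (Fintype.equivFin (C × (A × B))).symm with heqv
  set p : Fin (Fintype.card (C × (A × B))) → ℝ := fun m => lam (eqv m).1 (eqv m).2 with hp
  set Ψ : Fin (Fintype.card (C × (A × B))) → (A × B) → ℂ := fun m => ψ (eqv m).1 (eqv m).2
    with hΨ
  have hdecomp : margAB ρ = ∑ m, p m • pureSt (Ψ m) := by
    rw [← sum_tau hv, Finset.sum_congr rfl fun i _ => hspec i]
    rw [show (∑ i, ∑ k, lam i k • pureSt (ψ i k))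
        = ∑ x : C × (A × B), lam x.1 x.2 • pureSt (ψ x.1 x.2) from
      (Fintype.sum_prod_type
        (f := fun x : C × (A × B) => lam x.1 x.2 • pureSt (ψ x.1 x.2))).symm]
    exact (Equiv.sum_comp eqv (fun x : C × (A × B) => lam x.1 x.2 • pureSt (ψ x.1 x.2))).symm
  have hE0 : (∑ m, p m * entropy (ptraceRight (pureSt (Ψ m))))
      = ∑ i, ∑ k, lam i k * entropy (ptraceRight (pureSt (ψ i k))) := by
    rw [Equiv.sum_comp eqv
      (fun x : C × (A × B) => lam x.1 x.2 * entropy (ptraceRight (pureSt (ψ x.1 x.2))))]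
    exact Fintype.sum_prod_type
      (f := fun x : C × (A × B) => lam x.1 x.2 * entropy (ptraceRight (pureSt (ψ x.1 x.2))))
  have hbdd : BddBelow { e : ℝ | ∃ (K : ℕ) (p : Fin K → ℝ) (ψ : Fin K → (A × B) → ℂ),
      (∀ i, 0 ≤ p i) ∧ (∀ i, UnitVec (ψ i)) ∧
      margAB ρ = ∑ i, p i • pureSt (ψ i) ∧
      e = ∑ i, p i * entropy (ptraceRight (pureSt (ψ i))) } := by
    refine ⟨0, fun e he => ?_⟩
    obtain ⟨K', p', ψ', hp', hψ', -, he'⟩ := he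
    rw [he']
    refine Finset.sum_nonneg fun m _ => mul_nonneg (hp' m) (entropy_nonneg ?_ ?_)
    · exact ptraceRight_posSemidef (pureSt_posSemidef _)
    · rw [ptraceRight_trace, pureSt_trace (hψ' m)]
      norm_num
  have hmem : (∑ m, p m * entropy (ptraceRight (pureSt (Ψ m)))) ∈
      { e : ℝ | ∃ (K : ℕ) (p : Fin K → ℝ) (ψ : Fin K → (A × B) → ℂ),
        (∀ i, 0 ≤ p i) ∧ (∀ i, UnitVec (ψ i)) ∧
        margAB ρ = ∑ i, p i • pureSt (ψ i) ∧
        e = ∑ i, p i * entropy (ptraceRight (pureSt (ψ i))) } :=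
    ⟨_, p, Ψ, fun m => hlam0 _ _, fun m => hψu _ _, hdecomp, rfl⟩
  calc eof (margAB ρ) ≤ ∑ m, p m * entropy (ptraceRight (pureSt (Ψ m))) := by
        rw [eof]
        exact csInf_le hbdd hmem
    _ = ∑ i, ∑ k, lam i k * entropy (ptraceRight (pureSt (ψ i k))) := hE0
    _ ≤ ∑ i, measProb σ (v i) * entropy (postState σ (v i)) :=
        Finset.sum_le_sum fun i _ => hper i

end Key

/-- Koashi–Winter inequality: for every state `ρ_ABC`,
`E(ρ_AB) ≤ D^(C)(ρ_AC) + S_{ρ_AC}(A|C)`. -/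
theorem koashiWinter {A B C : Type*} [Fintype A] [Fintype B] [Fintype C]
    [DecidableEq A] [DecidableEq B] [DecidableEq C]
    (ρ : Matrix (A × B × C) (A × B × C) ℂ) (hρ : IsState ρ) :
    eof (margAB ρ) ≤ discord (margAC ρ) + condEnt (margAC ρ) := by
  classical
  obtain ⟨hpsd, -⟩ := hρ
  have hvstd : ONB (fun i j : C => if i = j then (1 : ℂ) else 0) := by
    intro i j
    simp only [dotProduct, Pi.star_apply, Complex.star_def, apply_ite (starRingEnd ℂ),
      _root_.map_one, _root_.map_zero, ite_mul, one_mul, zero_mul, mul_ite, mul_one, mul_zero,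
      Finset.sum_ite_eq, Finset.mem_univ, if_pos]
  have hcc : classicalCorr (margAC ρ)
      ≤ entropy (ptraceRight (margAC ρ)) - eof (margAB ρ) := by
    rw [classicalCorr]
    refine csSup_le ⟨_, ⟨_, hvstd, rfl⟩⟩ ?_
    rintro r ⟨v, hv, rfl⟩
    have := eof_le_measured hpsd (hv : ONB v)
    linarith
  rw [discord, condEnt, mutualInfo]
  linarith

end
end
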